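/- arXiv:2504.01166 — 5 statements merged into one kernel-verified Lean document; each statement's English description precedes it below -/
import Mathlib

section
/- Let α > 0, γ > 0, and let f be the Manneville–Pomeau map of parameter α. There exists a constant D > 0 such that for every φ ∈ C^{1,γ}_†(ℝ), every n ≥ 1, every connected component J of f^{−n}(J₀), and all x, y ∈ J, one has |S_n φ(x) − S_n φ(y)| ≤ D |φ|_{1,γ}, where S_n φ = Σ_{j=0}^{n−1} φ ∘ f^j. -/
open Real Set Filter Topology

/-- The Manneville–Pomeau map of parameter `α`. -/
noncomputable def MP (α : ℝ) : ℝ → ℝ := fun x =>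
  if x * (1 + x ^ α) ≤ 1 then x * (1 + x ^ α) else x * (1 + x ^ α) - 1

namespace Stmt8Aux

noncomputable def gMP (α : ℝ) : ℝ → ℝ := fun x => x * (1 + x ^ α)

lemma gMP_cont {α : ℝ} (hα : 0 < α) : Continuous (gMP α) := by
  rw [continuous_iff_continuousAt]
  intro x
  exact continuousAt_id.mul
    (continuousAt_const.add (Real.continuousAt_rpow_const x α (Or.inr hα.le)))

lemma gMP_strictMono {α : ℝ} (hα : 0 < α) : StrictMonoOn (gMP α) (Ici 0) := by
  intro x hx y hy hxy
  have h1 : x ^ α ≤ y ^ α := Real.rpow_le_rpow hx hxy.le hα.le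
  have h2 : (0:ℝ) ≤ x ^ α := Real.rpow_nonneg hx α
  have hx0 : (0:ℝ) ≤ x := hx
  simp only [gMP]
  nlinarith

lemma gMP_nonneg {α : ℝ} {x : ℝ} (hx : 0 ≤ x) : 0 ≤ gMP α x := by
  have := Real.rpow_nonneg hx α
  simp only [gMP]; nlinarith

lemma gMP_pos {α : ℝ} {x : ℝ} (hx : 0 < x) : 0 < gMP α x := by
  have := Real.rpow_nonneg hx.le α
  simp only [gMP]; nlinarith

lemma gMP_ge {α : ℝ} {x : ℝ} (hx : 0 ≤ x) : x ≤ gMP α x := by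
  have := Real.rpow_nonneg hx α
  simp only [gMP]; nlinarith

lemma gMP_gt {α : ℝ} {x : ℝ} (hx : 0 < x) : x < gMP α x := by
  have := Real.rpow_pos_of_pos hx α
  simp only [gMP]; nlinarith

lemma gMP_sub_self {α : ℝ} (x : ℝ) : gMP α x - x = x * x ^ α := by
  simp only [gMP]; ring

lemma gMP_hasDeriv {α : ℝ} (hα : 0 < α) {x : ℝ} (hx : 0 < x) :
    HasDerivAt (gMP α) (1 + (1+α) * x ^ α) x := by
  have h1 : HasDerivAt (fun y : ℝ => y ^ α) (α * x ^ (α - 1)) x :=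
    Real.hasDerivAt_rpow_const (Or.inl hx.ne')
  have h2 : HasDerivAt (fun y : ℝ => 1 + y ^ α) (α * x ^ (α - 1)) x := h1.const_add 1
  have h3 := (hasDerivAt_id x).mul h2
  have hxx : x * x ^ (α - 1) = x ^ α := by
    have h := Real.rpow_add hx 1 (α - 1)
    simp only [Real.rpow_one] at h
    rw [show (1:ℝ) + (α - 1) = α by ring] at h
    linarith [h]
  have key : 1 * (1 + x ^ α) + id x * (α * x ^ (α - 1)) = 1 + (1+α) * x ^ α := by
    simp only [id]
    nlinarith [hxx]
  rw [key] at h3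
  exact h3

lemma gMP_slope {α : ℝ} (hα : 0 < α) {p q : ℝ} (hp : 0 < p) (hpq : p ≤ q) :
    (1 + (1+α) * p ^ α) * (q - p) ≤ gMP α q - gMP α p := by
  rcases eq_or_lt_of_le hpq with rfl | hlt
  · simp
  obtain ⟨c, hc, hceq⟩ := exists_hasDerivAt_eq_slope (gMP α) (fun x => 1 + (1+α) * x ^ α) hlt
    ((gMP_cont hα).continuousOn) (fun x hx' => gMP_hasDeriv hα (hp.trans hx'.1))
  have hc0 : 0 < c := hp.trans hc.1
  have heq : gMP α q - gMP α p = (1 + (1+α) * c ^ α) * (q - p) := by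
    rw [eq_div_iff (sub_ne_zero.mpr hlt.ne')] at hceq
    linarith [hceq]
  have hpc : p ^ α ≤ c ^ α := Real.rpow_le_rpow hp.le hc.1.le hα.le
  have h1α : (0:ℝ) ≤ 1 + α := by linarith
  rw [heq]
  have : 1 + (1+α) * p ^ α ≤ 1 + (1+α) * c ^ α := by nlinarith
  nlinarith [sub_pos.mpr hlt]

lemma MP_eq_left {α x₁ : ℝ} (hα : 0 < α) (hfix : gMP α x₁ = 1) {x : ℝ}
    (h0 : 0 ≤ x) (h1 : x ≤ x₁) : MP α x = gMP α x := by
  have : gMP α x ≤ 1 := by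
    rcases eq_or_lt_of_le h1 with rfl | h
    · exact hfix.le
    · exact le_of_lt (hfix ▸ gMP_strictMono hα h0 (h0.trans h1) h)
  simp only [MP, gMP] at this ⊢
  rw [if_pos this]

lemma MP_eq_right {α x₁ : ℝ} (hα : 0 < α) (hfix : gMP α x₁ = 1) {x : ℝ}
    (h0 : 0 < x₁) (hx : x₁ < x) : MP α x = gMP α x - 1 := by
  have : 1 < gMP α x := hfix ▸ gMP_strictMono hα h0.le (h0.le.trans hx.le) hx
  simp only [MP, gMP] at this ⊢
  rw [if_neg (not_le.mpr this)]

lemma MP_zero {α : ℝ} : MP α 0 = 0 := by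
  simp [MP]

lemma exists_pre {α : ℝ} (hα : 0 < α) {y : ℝ} (hy : 0 < y) :
    ∃ z, 0 < z ∧ z < y ∧ gMP α z = y := by
  have h0 : gMP α 0 = 0 := by simp [gMP]
  have hyy : y < gMP α y := gMP_gt hy
  have := intermediate_value_Ioo (le_of_lt hy) ((gMP_cont hα).continuousOn (s := Icc 0 y))
  have hmem : y ∈ Ioo (gMP α 0) (gMP α y) := by rw [h0]; exact ⟨hy, hyy⟩
  obtain ⟨z, hz, hgz⟩ := this hmem
  exact ⟨z, hz.1, hz.2, hgz⟩

noncomputable def xs (α x₁ : ℝ) (hα : 0 < α) (h0 : 0 < x₁) : ℕ → {z : ℝ // 0 < z ∧ z ≤ x₁} :=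
  Nat.rec ⟨x₁, h0, le_rfl⟩ (fun _ p =>
    ⟨Classical.choose (exists_pre hα p.2.1),
     (Classical.choose_spec (exists_pre hα p.2.1)).1,
     ((Classical.choose_spec (exists_pre hα p.2.1)).2.1.le.trans p.2.2)⟩)

variable {α x₁ : ℝ}

lemma xs_zero (hα : 0 < α) (h0 : 0 < x₁) : (xs α x₁ hα h0 0).1 = x₁ := rfl

lemma xs_pos (hα : 0 < α) (h0 : 0 < x₁) (L : ℕ) : 0 < (xs α x₁ hα h0 L).1 :=
  (xs α x₁ hα h0 L).2.1

lemma xs_le (hα : 0 < α) (h0 : 0 < x₁) (L : ℕ) : (xs α x₁ hα h0 L).1 ≤ x₁ :=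
  (xs α x₁ hα h0 L).2.2

lemma xs_succ_lt (hα : 0 < α) (h0 : 0 < x₁) (L : ℕ) :
    (xs α x₁ hα h0 (L+1)).1 < (xs α x₁ hα h0 L).1 :=
  (Classical.choose_spec (exists_pre hα (xs α x₁ hα h0 L).2.1)).2.1

lemma xs_succ_g (hα : 0 < α) (h0 : 0 < x₁) (L : ℕ) :
    gMP α (xs α x₁ hα h0 (L+1)).1 = (xs α x₁ hα h0 L).1 :=
  (Classical.choose_spec (exists_pre hα (xs α x₁ hα h0 L).2.1)).2.2

/-- orbit stays below `x₁` while starting below `x k`. -/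
lemma orbit_below (hα : 0 < α) (h0 : 0 < x₁) (hfix : gMP α x₁ = 1) :
    ∀ k : ℕ, ∀ z : ℝ, 0 ≤ z → z ≤ (xs α x₁ hα h0 k).1 →
      0 ≤ (MP α)^[k] z ∧ (MP α)^[k] z ≤ x₁ := by
  intro k
  induction k with
  | zero => intro z h1 h2; exact ⟨h1, by simpa [xs_zero] using h2⟩
  | succ k ih =>
    intro z h1 h2
    rw [Function.iterate_succ_apply]
    have hzx : z ≤ x₁ := h2.trans (xs_le hα h0 (k+1))
    have hMP : MP α z = gMP α z := MP_eq_left hα hfix h1 hzx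
    rw [hMP]
    refine ih (gMP α z) (gMP_nonneg h1) ?_
    rw [← xs_succ_g hα h0 k]
    rcases eq_or_lt_of_le h2 with heq | h
    · rw [heq]
    · exact ((gMP_strictMono hα) h1 (xs_pos hα h0 (k+1)).le h).le

/-- comparison: if z starts above `x k` and its orbit stays in the left branch,
    after k steps it exceeds x₁. -/
lemma orbit_above (hα : 0 < α) (h0 : 0 < x₁) (hfix : gMP α x₁ = 1) :
    ∀ k : ℕ, ∀ z : ℝ, (xs α x₁ hα h0 k).1 < z →
      (∀ i, i < k → (MP α)^[i] z ≤ x₁) → x₁ < (MP α)^[k] z := by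
  intro k
  induction k with
  | zero => intro z h1 _; simpa [xs_zero] using h1
  | succ k ih =>
    intro z h1 hleft
    have hz1 : z ≤ x₁ := by simpa using hleft 0 (Nat.succ_pos k)
    have hz0 : 0 < z := (xs_pos hα h0 (k+1)).trans h1
    rw [Function.iterate_succ_apply]
    have hMP : MP α z = gMP α z := MP_eq_left hα hfix hz0.le hz1
    rw [hMP]
    refine ih (gMP α z) ?_ ?_
    · rw [← xs_succ_g hα h0 k]
      exact gMP_strictMono hα (xs_pos hα h0 (k+1)).le hz0.le h1
    · intro i hi
      have := hleft (i+1) (by omega)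
      rwa [Function.iterate_succ_apply, hMP] at this

/-- Bernoulli-type lower bound. -/
lemma bern (hα : 0 < α) {u : ℝ} (hu0 : 0 ≤ u) (hu1 : u ≤ 1) :
    1 + min 1 ((2:ℝ)^α - 1) * u ≤ (1+u)^α := by
  rcases le_or_gt 1 α with h1 | h1
  · have h2 : (2:ℝ) = (2:ℝ)^(1:ℝ) := (Real.rpow_one 2).symm
    have h2' : (2:ℝ)^(1:ℝ) ≤ (2:ℝ)^α := Real.rpow_le_rpow_of_exponent_le one_le_two h1
    have hmin : min 1 ((2:ℝ)^α - 1) = 1 := by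
      rw [min_eq_left]; rw [Real.rpow_one] at h2'; linarith
    rw [hmin, one_mul]
    calc 1 + u = (1+u)^(1:ℝ) := (Real.rpow_one _).symm
    _ ≤ (1+u)^α := Real.rpow_le_rpow_of_exponent_le (by linarith) h1
  · have h2' : (2:ℝ)^α ≤ (2:ℝ)^(1:ℝ) := Real.rpow_le_rpow_of_exponent_le one_le_two h1.le
    rw [Real.rpow_one] at h2'
    have hmin : min 1 ((2:ℝ)^α - 1) = (2:ℝ)^α - 1 := by
      rw [min_eq_right]; linarith
    rw [hmin]
    have cc := (strictConcaveOn_rpow hα h1).concaveOn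
    have hmem1 : (1:ℝ) ∈ Ici (0:ℝ) := by norm_num
    have hmem2 : (2:ℝ) ∈ Ici (0:ℝ) := by norm_num
    have hcomb := cc.2 hmem1 hmem2 (by linarith : (0:ℝ) ≤ 1 - u) hu0 (by ring)
    simp only [smul_eq_mul] at hcomb
    have he : (1-u) * 1 + u * 2 = 1 + u := by ring
    rw [he] at hcomb
    rw [Real.one_rpow] at hcomb
    calc 1 + ((2:ℝ)^α - 1) * u = (1-u) * 1 + u * (2:ℝ)^α := by ring
    _ ≤ (1+u)^α := hcomb

/-- The decay constant for the sequence `xs`. -/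
noncomputable def brn (α : ℝ) : ℝ := min 1 ((2:ℝ)^α - 1) / (2:ℝ)^α

lemma brn_pos (hα : 0 < α) : 0 < brn α := by
  have h2 : (1:ℝ) < (2:ℝ)^α := Real.one_lt_rpow one_lt_two hα
  have h2' : (0:ℝ) < (2:ℝ)^α := by linarith
  apply div_pos _ h2'
  rw [lt_min_iff]; constructor <;> linarith

lemma inv_step (hα : 0 < α) {u : ℝ} (hu0 : 0 < u) (hu1 : u ≤ 1) :
    (u * (1+u)^α)⁻¹ + brn α ≤ u⁻¹ := by
  set a := min 1 ((2:ℝ)^α - 1) with ha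
  have h2 : (1:ℝ) < (2:ℝ)^α := Real.one_lt_rpow one_lt_two hα
  have ha0 : 0 < a := by rw [ha, lt_min_iff]; constructor <;> linarith
  have ha1 : a ≤ (2:ℝ)^α - 1 := min_le_right _ _
  have hP1 : 1 + a * u ≤ (1+u)^α := bern hα hu0.le hu1
  have hP2 : (1+u)^α ≤ (2:ℝ)^α := Real.rpow_le_rpow (by linarith) (by linarith) hα.le
  have hP0 : (0:ℝ) < (1+u)^α := by nlinarith
  set c := brn α with hc
  have hc2 : c * (2:ℝ)^α = a := by
    rw [hc, brn, div_mul_cancel₀]; linarith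
  have hcpos : 0 < c := brn_pos hα
  -- (1+u)^α inverse bound
  have step1 : ((1+u)^α)⁻¹ ≤ (1 + a*u)⁻¹ := by
    apply inv_anti₀ (by nlinarith) hP1
  have step2 : (1 + a*u)⁻¹ ≤ 1 - c*u := by
    rw [← one_div, div_le_iff₀ (by nlinarith)]
    nlinarith [mul_pos hcpos hu0]
  have e1 : (u * (1+u)^α)⁻¹ = u⁻¹ * ((1+u)^α)⁻¹ := by
    rw [mul_inv]
  have e2 : u⁻¹ * (1 - c*u) = u⁻¹ - c := by
    field_simp
  have hinv : (0:ℝ) ≤ u⁻¹ := by positivity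
  calc (u * (1+u)^α)⁻¹ + c = u⁻¹ * ((1+u)^α)⁻¹ + c := by rw [e1]
  _ ≤ u⁻¹ * (1 - c*u) + c := by
      have := mul_le_mul_of_nonneg_left (step1.trans step2) hinv
      linarith
  _ = u⁻¹ := by rw [e2]; ring

lemma xs_decay (hα : 0 < α) (h0 : 0 < x₁) (h1 : x₁ ≤ 1) :
    ∀ L : ℕ, brn α * L ≤ (((xs α x₁ hα h0 L).1) ^ α)⁻¹ := by
  intro L
  induction L with
  | zero =>
    have := Real.rpow_pos_of_pos (xs_pos hα h0 0) α
    simp only [Nat.cast_zero, mul_zero]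
    positivity
  | succ L ih =>
    set y := (xs α x₁ hα h0 (L+1)).1 with hy
    have hy0 : 0 < y := xs_pos hα h0 (L+1)
    have hy1 : y ≤ 1 := (xs_le hα h0 (L+1)).trans h1
    set u := y ^ α with hu
    have hu0 : 0 < u := Real.rpow_pos_of_pos hy0 α
    have hu1 : u ≤ 1 := Real.rpow_le_one hy0.le hy1 hα.le
    have hg : gMP α y = (xs α x₁ hα h0 L).1 := xs_succ_g hα h0 L
    have hYα : ((xs α x₁ hα h0 L).1) ^ α = u * (1+u)^α := by
      rw [← hg]
      show (y * (1 + y ^ α)) ^ α = u * (1+u)^α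
      rw [Real.mul_rpow hy0.le (by positivity), hu]
    have step := inv_step hα hu0 hu1
    rw [hYα] at ih
    push_cast
    calc brn α * ((L:ℝ) + 1) = brn α * L + brn α := by ring
    _ ≤ (u * (1+u)^α)⁻¹ + brn α := by linarith
    _ ≤ u⁻¹ := step
    _ = (y ^ α)⁻¹ := by rw [hu]

lemma xs_alpha_le (hα : 0 < α) (h0 : 0 < x₁) (h1 : x₁ ≤ 1) (L : ℕ) (hL : 1 ≤ L) :
    ((xs α x₁ hα h0 L).1) ^ α ≤ (brn α * L)⁻¹ := by
  have hpos : 0 < brn α * L := by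
    have := brn_pos hα
    have : (0:ℝ) < (L:ℝ) := by exact_mod_cast hL
    positivity
  have h := xs_decay hα h0 h1 L
  rw [← inv_inv (((xs α x₁ hα h0 L).1) ^ α)]
  exact inv_anti₀ hpos h

/-- MVT bound, concave power, gap version. -/
lemma rpow_sub_le_of_exp_le_one {γ p b a : ℝ} (hγ : 0 < γ) (hγ1 : γ ≤ 1) (hp : 0 < p)
    (hpb : p ≤ b) (hba : b ≤ a) : a^γ - b^γ ≤ γ * p^(γ-1) * (a-b) := by
  rcases eq_or_lt_of_le hba with rfl | hlt
  · simp
  obtain ⟨c, hc, hceq⟩ := exists_hasDerivAt_eq_slope (fun t => t^γ) (fun t => γ * t^(γ-1)) hlt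
    (fun t ht => (Real.continuousAt_rpow_const t γ
      (Or.inl (ne_of_gt (hp.trans_le (hpb.trans ht.1))))).continuousWithinAt)
    (fun t ht => Real.hasDerivAt_rpow_const
      (Or.inl (ne_of_gt (hp.trans_le (hpb.trans ht.1.le)))))
  have hc0 : 0 < c := hp.trans_le (hpb.trans hc.1.le)
  have heq : a^γ - b^γ = γ * c^(γ-1) * (a - b) := by
    rw [eq_div_iff (sub_ne_zero.mpr hlt.ne')] at hceq
    linarith [hceq]
  have hcp : c^(γ-1) ≤ p^(γ-1) :=
    Real.rpow_le_rpow_of_nonpos hp (hpb.trans hc.1.le) (by linarith)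
  rw [heq]
  have hab : 0 < a - b := sub_pos.mpr hlt
  have h2 := mul_le_mul_of_nonneg_left hcp hγ.le
  exact mul_le_mul_of_nonneg_right h2 hab.le

/-- MVT bound, exponent ≥ 1. -/
lemma rpow_sub_le_one_mul {γ b a : ℝ} (hγ1 : 1 ≤ γ) (hb : 0 ≤ b) (hba : b ≤ a) (ha : a ≤ 1) :
    a^γ - b^γ ≤ γ * (a-b) := by
  rcases eq_or_lt_of_le hba with rfl | hlt
  · simp
  obtain ⟨c, hc, hceq⟩ := exists_hasDerivAt_eq_slope (fun t => t^γ) (fun t => γ * t^(γ-1)) hlt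
    (fun t _ => ((Real.hasDerivAt_rpow_const (p := γ) (Or.inr hγ1)).continuousAt).continuousWithinAt)
    (fun t _ => Real.hasDerivAt_rpow_const (Or.inr hγ1))
  have hc0 : 0 < c := hb.trans_lt hc.1
  have heq : a^γ - b^γ = γ * c^(γ-1) * (a - b) := by
    rw [eq_div_iff (sub_ne_zero.mpr hlt.ne')] at hceq
    linarith [hceq]
  have hcp : c^(γ-1) ≤ 1 := Real.rpow_le_one hc0.le (hc.2.trans_le ha).le (by linarith)
  rw [heq]
  have hab : 0 < a - b := sub_pos.mpr hlt
  have hγ0 : (0:ℝ) ≤ γ := by linarith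
  have h2 := mul_le_mul_of_nonneg_left hcp hγ0
  rw [mul_one] at h2
  exact mul_le_mul_of_nonneg_right h2 hab.le

/-- subadditivity of rpow with exponent ≤ 1. -/
lemma rpow_sub_le_sub_rpow {γ b a : ℝ} (hγ : 0 ≤ γ) (hγ1 : γ ≤ 1) (hb : 0 ≤ b) (hba : b ≤ a) :
    a^γ - b^γ ≤ (a-b)^γ := by
  have key := NNReal.rpow_add_le_add_rpow ((a-b).toNNReal) (b.toNNReal) hγ hγ1
  have h1 : (a-b).toNNReal + b.toNNReal = a.toNNReal := by
    rw [← Real.toNNReal_add (by linarith) hb, sub_add_cancel]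
  rw [h1] at key
  have := NNReal.coe_le_coe.mpr key
  push_cast [NNReal.coe_rpow] at this
  rw [Real.coe_toNNReal a (hb.trans hba), Real.coe_toNNReal b hb,
    Real.coe_toNNReal (a-b) (by linarith)] at this
  linarith

/-- interpolation between two bounds. -/
lemma min_interp {E G B th : ℝ} (hE : 0 ≤ E) (hG : E ≤ G) (hB : E ≤ B)
    (ht0 : 0 ≤ th) (ht1 : th ≤ 1) : E ≤ G^(1-th) * B^th := by
  rcases eq_or_lt_of_le hE with h | h
  · have : 0 ≤ G^(1-th) * B^th := by
      apply mul_nonneg (Real.rpow_nonneg (by linarith) _) (Real.rpow_nonneg (by linarith) _)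
    linarith
  have e1 : E = E^(1-th) * E^th := by
    rw [← Real.rpow_add h, sub_add_cancel, Real.rpow_one]
  rw [e1]
  exact mul_le_mul (Real.rpow_le_rpow hE hG (by linarith)) (Real.rpow_le_rpow hE hB ht0)
    (Real.rpow_nonneg hE th) (Real.rpow_nonneg (hE.trans hG) (1-th))

lemma geom_bound {m' : ℝ} (h0 : 0 ≤ m') (h1 : m' < 1) (N : ℕ) :
    ∑ r ∈ Finset.range N, m'^r ≤ (1-m')⁻¹ := by
  have hm : 0 < 1 - m' := by linarith
  rw [geom_sum_eq (by linarith : m' ≠ 1)]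
  have h2 : (m'^N - 1)/(m' - 1) = (1 - m'^N)/(1 - m') := by
    rw [div_eq_div_iff (by linarith) (by linarith)]; ring
  rw [h2, div_le_iff₀ hm, inv_mul_cancel₀ hm.ne']
  have : 0 ≤ m'^N := pow_nonneg h0 N
  linarith

lemma pow_gap {s : ℝ} (hs : 1 < s) {t : ℝ} (ht : 1 ≤ t) :
    (t+1)^(-s) * (s - 1) ≤ t^(-(s-1)) - (t+1)^(-(s-1)) := by
  have hlt : t < t + 1 := by linarith
  obtain ⟨c, hc, hceq⟩ := exists_hasDerivAt_eq_slope (fun x => -(x^(-(s-1))))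
    (fun x => (s-1) * x^(-s)) hlt
    (fun x hx => (((Real.hasDerivAt_rpow_const (p := -(s-1))
      (Or.inl (by intro h; rw [h] at hx; linarith [hx.1]))).neg).continuousAt).continuousWithinAt)
    (fun x hx => by
      have hx0 : x ≠ 0 := by intro h; rw [h] at hx; linarith [hx.1]
      have := (Real.hasDerivAt_rpow_const (x := x) (p := -(s-1)) (Or.inl hx0)).neg
      have h2 : -(-(s-1) * x ^ (-(s-1) - 1)) = (s-1) * x^(-s) := by
        rw [show -(s-1) - 1 = -s by ring]; ring
      rw [h2] at this; exact this)
  have hc0 : 0 < c := by linarith [hc.1]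
  have heq : (s-1) * c^(-s) = t^(-(s-1)) - (t+1)^(-(s-1)) := by
    have hd : t + 1 - t = 1 := by ring
    rw [hd, div_one] at hceq
    linarith [hceq]
  have hcp : (t+1)^(-s) ≤ c^(-s) :=
    Real.rpow_le_rpow_of_nonpos hc0 hc.2.le (by linarith)
  nlinarith [heq, hcp]

lemma sumpow {s : ℝ} (hs : 1 < s) (N : ℕ) :
    ∑ j ∈ Finset.range N, ((j:ℝ)+1)^(-s) ≤ 1 + (s-1)⁻¹ := by
  have hinv : 0 < (s-1)⁻¹ := by
    have : 0 < s - 1 := by linarith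
    positivity
  have key : ∀ K : ℕ, ∑ j ∈ Finset.range (K+1), ((j:ℝ)+1)^(-s)
      ≤ 1 + (s-1)⁻¹ * (1 - ((K:ℝ)+1)^(-(s-1))) := by
    intro K
    induction K with
    | zero =>
      rw [Finset.sum_range_one]
      norm_num [Real.one_rpow]
    | succ K ih =>
      rw [Finset.sum_range_succ]
      have hgap := pow_gap hs (t := (K:ℝ)+1) (by have : (0:ℝ) ≤ (K:ℝ) := Nat.cast_nonneg K; linarith)
      have hterm : (((K+1:ℕ):ℝ)+1)^(-s) ≤ (s-1)⁻¹ * (((K:ℝ)+1)^(-(s-1)) - ((K:ℝ)+2)^(-(s-1))) := by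
        push_cast
        rw [show (K:ℝ)+1+1 = (K:ℝ)+2 by ring] at hgap ⊢
        calc ((K:ℝ)+2)^(-s) = (s-1)⁻¹ * (((K:ℝ)+2)^(-s) * (s-1)) := by
              rw [mul_comm ((s-1)⁻¹) _, mul_assoc, mul_inv_cancel₀ (by linarith : s-1 ≠ 0), mul_one]
        _ ≤ (s-1)⁻¹ * (((K:ℝ)+1)^(-(s-1)) - ((K:ℝ)+2)^(-(s-1))) :=
              mul_le_mul_of_nonneg_left hgap hinv.le
      push_cast at ih hterm ⊢
      rw [show (K:ℝ)+1+1 = (K:ℝ)+2 by ring] at hterm ⊢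
      linarith
  cases N with
  | zero => simp; positivity
  | succ K =>
    have := key K
    have hq : 0 ≤ ((K:ℝ)+1)^(-(s-1)) := Real.rpow_nonneg (by positivity) _
    nlinarith

lemma npow_rpow {b : ℝ} (hb : 0 ≤ b) (k : ℕ) (e : ℝ) : (b ^ k) ^ e = (b ^ e) ^ k := by
  rw [← Real.rpow_natCast b k, ← Real.rpow_mul hb, mul_comm, Real.rpow_mul hb,
    Real.rpow_natCast]

/-- the φ-increment bound. -/
lemma phi_bound {γ M : ℝ} (hγ : 0 < γ) (φ φ' : ℝ → ℝ)
    (hφc : ContinuousOn φ (Icc 0 1)) (hφd : ∀ z ∈ Ioc (0:ℝ) 1, HasDerivAt φ (φ' z) z)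
    (hM : ∀ z ∈ Ioc (0:ℝ) 1, |φ' z| ≤ M * (γ * z ^ (γ-1)))
    {b a : ℝ} (hb : 0 < b) (hba : b ≤ a) (ha : a ≤ 1) :
    |φ a - φ b| ≤ M * (a^γ - b^γ) := by
  have key : ∀ g g' : ℝ → ℝ, ContinuousOn g (Icc 0 1) →
      (∀ z ∈ Ioc (0:ℝ) 1, HasDerivAt g (g' z) z) →
      (∀ z ∈ Ioc (0:ℝ) 1, g' z ≤ M * (γ * z ^ (γ-1))) →
      g a - g b ≤ M * (a^γ - b^γ) := by
    intro g g' hgc hgd hgM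
    have hIcc : Icc b a ⊆ Icc (0:ℝ) 1 := Icc_subset_Icc hb.le ha
    have hIoo : Ioo b a ⊆ Ioc (0:ℝ) 1 := fun t ht => ⟨hb.trans ht.1, (ht.2.trans_le ha).le⟩
    have hmono : MonotoneOn (fun t => M * t^γ - g t) (Icc b a) := by
      apply monotoneOn_of_hasDerivWithinAt_nonneg (convex_Icc b a)
        (f' := fun t => M * (γ * t^(γ-1)) - g' t)
      · apply ContinuousOn.sub _ (hgc.mono hIcc)
        exact ContinuousOn.const_smul (fun t ht => (Real.continuousAt_rpow_const t γ
          (Or.inl (ne_of_gt (hb.trans_le ht.1)))).continuousWithinAt) M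
      · intro t ht
        rw [interior_Icc] at ht
        exact (((Real.hasDerivAt_rpow_const
          (Or.inl (ne_of_gt (hb.trans ht.1)))).const_mul M).sub
          (hgd t (hIoo ht))).hasDerivWithinAt
      · intro t ht
        rw [interior_Icc] at ht
        have := hgM t (hIoo ht)
        simp only [sub_nonneg]
        linarith
    have h1 : M * b^γ - g b ≤ M * a^γ - g a :=
      hmono (left_mem_Icc.mpr hba) (right_mem_Icc.mpr hba) hba
    linarith
  have h1 := key φ φ' hφc hφd (fun z hz => (abs_le.mp (hM z hz)).2)
  have h2 := key (fun t => -φ t) (fun t => -φ' t) hφc.neg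
    (fun z hz => (hφd z hz).neg)
    (fun z hz => by
      have := (abs_le.mp (hM z hz)).1
      show -φ' z ≤ M * (γ * z ^ (γ-1))
      linarith)
  rw [abs_sub_le_iff]
  constructor
  · exact h1
  · simp only [neg_sub_neg] at h2
    linarith

end Stmt8Aux

set_option maxHeartbeats 2000000 in
open Stmt8Aux in
theorem stmt8 (α γ : ℝ) (hα : 0 < α) (hγ : 0 < γ) (x₁ : ℝ)
    (hx₁ : x₁ ∈ Set.Ioo (0:ℝ) 1) (hfix : x₁ * (1 + x₁ ^ α) = 1) :
    ∃ D > (0:ℝ), ∀ φ φ' : ℝ → ℝ,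
      ContinuousOn φ (Set.Icc 0 1) →
      (∀ z ∈ Set.Ioc (0:ℝ) 1, HasDerivAt φ (φ' z) z) →
      ContinuousOn φ' (Set.Ioc 0 1) →
      (∃ c : ℝ, Filter.Tendsto (fun z => φ' z / (z ^ (γ - 1)))
        (nhdsWithin 0 (Set.Ioi 0)) (nhds c)) →
      ∀ M : ℝ, (∀ z ∈ Set.Ioc (0:ℝ) 1, |φ' z| ≤ M * (γ * z ^ (γ - 1))) →
      ∀ n : ℕ, 1 ≤ n → ∀ J : Set ℝ,
        J.Nonempty → IsPreconnected J →
        J ⊆ {z | z ∈ Set.Icc (0:ℝ) 1 ∧ (MP α)^[n] z ∈ Set.Ioc x₁ 1} →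
        (∀ J' : Set ℝ, IsPreconnected J' → J ⊆ J' →
          J' ⊆ {z | z ∈ Set.Icc (0:ℝ) 1 ∧ (MP α)^[n] z ∈ Set.Ioc x₁ 1} → J' = J) →
        ∀ u ∈ J, ∀ v ∈ J,
          |∑ j ∈ Finset.range n, φ ((MP α)^[j] u) -
            ∑ j ∈ Finset.range n, φ ((MP α)^[j] v)| ≤ D * M := by
  classical
  obtain ⟨hx0, hx11⟩ := hx₁
  have hfix' : gMP α x₁ = 1 := hfix
  -- constants depending only on α, γ, x₁
  obtain ⟨gb, hgb⟩ : ∃ X : ℝ, X = min γ 1 := ⟨_, rfl⟩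
  have hgb0 : 0 < gb := by rw [hgb]; exact lt_min hγ one_pos
  have hgb1 : gb ≤ 1 := by rw [hgb]; exact min_le_right _ _
  have hx₁α : 0 < x₁ ^ α := Real.rpow_pos_of_pos hx0 α
  obtain ⟨lam, hlam⟩ : ∃ X : ℝ, X = 1 + (1+α) * x₁ ^ α := ⟨_, rfl⟩
  have hlam1 : 1 < lam := by rw [hlam]; nlinarith
  obtain ⟨mu0, hmu0⟩ : ∃ X : ℝ, X = lam⁻¹ := ⟨_, rfl⟩
  have hmu00 : 0 < mu0 := by rw [hmu0]; exact inv_pos.mpr (by linarith)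
  have hmu01 : mu0 < 1 := by rw [hmu0]; exact inv_lt_one_of_one_lt₀ hlam1
  obtain ⟨mu1, hmu1⟩ : ∃ X : ℝ, X = mu0 ^ gb := ⟨_, rfl⟩
  have hmu10 : 0 < mu1 := by rw [hmu1]; exact Real.rpow_pos_of_pos hmu00 _
  have hmu11 : mu1 < 1 := by rw [hmu1]; exact Real.rpow_lt_one hmu00.le hmu01 hgb0
  obtain ⟨th, hth⟩ : ∃ X : ℝ, X = gb / (2*(α+gb)) := ⟨_, rfl⟩
  have hαgb : 0 < α + gb := by linarith
  have hth0 : 0 < th := by rw [hth]; positivity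
  have hth1 : th ≤ 1 := by
    rw [hth, div_le_one (by linarith)]; linarith
  obtain ⟨mu2, hmu2⟩ : ∃ X : ℝ, X = mu1 ^ th := ⟨_, rfl⟩
  have hmu20 : 0 < mu2 := by rw [hmu2]; exact Real.rpow_pos_of_pos hmu10 _
  have hmu21 : mu2 < 1 := by rw [hmu2]; exact Real.rpow_lt_one hmu10.le hmu11 hth0
  obtain ⟨sS, hsS⟩ : ∃ X : ℝ, X = 1 + gb / (2*α) := ⟨_, rfl⟩
  have hs1 : 1 < sS := by
    rw [hsS]
    have : 0 < gb/(2*α) := by positivity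
    linarith
  have hsexp : (α + gb) * (1 - th) = sS * α := by
    rw [hth, hsS]; field_simp; ring
  obtain ⟨cb, hcb⟩ : ∃ X : ℝ, X = brn α := ⟨_, rfl⟩
  have hcb0 : 0 < cb := by rw [hcb]; exact brn_pos hα
  obtain ⟨CA, hCA⟩ : ∃ X : ℝ, X = (cb⁻¹) ^ sS := ⟨_, rfl⟩
  have hCA0 : 0 ≤ CA := by rw [hCA]; exact Real.rpow_nonneg (by positivity) _
  obtain ⟨K, hK⟩ : ∃ X : ℝ, X = max γ 1 := ⟨_, rfl⟩
  have hK1 : 1 ≤ K := by rw [hK]; exact le_max_right _ _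
  have hK0 : 0 < K := lt_of_lt_of_le one_pos hK1
  have hKγ : γ ≤ K := by rw [hK]; exact le_max_left _ _
  obtain ⟨A, hA⟩ : ∃ X : ℝ, X = 1 + CA * (1 + (sS-1)⁻¹) := ⟨_, rfl⟩
  have hsinv : 0 ≤ (sS-1)⁻¹ := by
    have : 0 < sS - 1 := by linarith
    positivity
  have hA1 : 1 ≤ A := by
    rw [hA]; nlinarith
  obtain ⟨B, hB⟩ : ∃ X : ℝ, X = (1 - mu2)⁻¹ := ⟨_, rfl⟩
  have hB0 : 0 < B := by rw [hB]; exact inv_pos.mpr (by linarith)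
  refine ⟨K * (A*B) + 1, by nlinarith [mul_pos hK0 (mul_pos (lt_of_lt_of_le one_pos hA1) hB0)], ?_⟩
  intro φ φ' hφc hφd _ _ M hM n hn J hJne hJconn hJS hJmax uu huu vv hvv
  have hMnn : 0 ≤ M := by
    have h := hM 1 ⟨one_pos, le_rfl⟩
    rw [Real.one_rpow, mul_one] at h
    by_contra hcon
    push_neg at hcon
    have h2 : M * γ < 0 := mul_neg_of_neg_of_pos hcon hγ
    have h3 := abs_nonneg (φ' 1)
    linarith only [h, h2, h3]
  have key : ∀ u v : ℝ, u ∈ J → v ∈ J → v ≤ u →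
      |∑ j ∈ Finset.range n, φ ((MP α)^[j] u) -
        ∑ j ∈ Finset.range n, φ ((MP α)^[j] v)| ≤ (K * (A*B) + 1) * M := by
    intro u v hu hv hvu
    have hsub : Icc v u ⊆ J := hJconn.ordConnected.out hv hu
    have hzIcc : ∀ z ∈ Icc v u, 0 ≤ z ∧ z ≤ 1 := fun z hz => (hJS (hsub hz)).1
    have hzn : ∀ z ∈ Icc v u, x₁ < (MP α)^[n] z ∧ (MP α)^[n] z ≤ 1 :=
      fun z hz => (hJS (hsub hz)).2
    have hmemu : u ∈ Icc v u := ⟨hvu, le_rfl⟩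
    have hmemv : v ∈ Icc v u := ⟨le_rfl, hvu⟩
    have hv0 : 0 < v := by
      rcases eq_or_lt_of_le (hzIcc v hmemv).1 with h0 | h0
      · exfalso
        have hz : (MP α)^[n] v = 0 := by
          rw [← h0]
          exact Function.iterate_fixed MP_zero n
        have := (hzn v hmemv).1
        rw [hz] at this
        linarith
      · exact h0
    -- the central structure/branch induction
    have main : ∀ j, j ≤ n →
        (StrictMonoOn ((MP α)^[j]) (Icc v u) ∧ ContinuousOn ((MP α)^[j]) (Icc v u) ∧
          (∀ z ∈ Icc v u, 0 < (MP α)^[j] z ∧ (MP α)^[j] z ≤ 1)) ∧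
        ((∀ z ∈ Icc v u, (MP α)^[j] z ≤ x₁) ∨ (∀ z ∈ Icc v u, x₁ < (MP α)^[j] z)) := by
      have sameside : ∀ j, j ≤ n → StrictMonoOn ((MP α)^[j]) (Icc v u) →
          ContinuousOn ((MP α)^[j]) (Icc v u) →
          (∀ z ∈ Icc v u, 0 < (MP α)^[j] z ∧ (MP α)^[j] z ≤ 1) →
          ((∀ z ∈ Icc v u, (MP α)^[j] z ≤ x₁) ∨ (∀ z ∈ Icc v u, x₁ < (MP α)^[j] z)) := by
        intro j hj hmono hcont hbnd
        by_contra hcon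
        push_neg at hcon
        obtain ⟨⟨q, hq, hqx⟩, ⟨p, hp, hpx⟩⟩ := hcon
        rcases eq_or_lt_of_le hj with rfl | hjn
        · exact absurd (hzn p hp).1 (not_lt.mpr hpx)
        · -- j < n
          set mrem : ℕ := n - j - 1 with hmrem
          have hnm : n = mrem + (j+1) := by omega
          set P' : ℝ := (MP α)^[j] q with hP'
          have hP'1 : P' ≤ 1 := (hbnd q hq).2
          have hgP' : 1 < gMP α P' := by
            rw [← hfix']
            exact gMP_strictMono hα hx0.le (hx0.le.trans hqx.le) hqx
          obtain ⟨ε, hε⟩ : ∃ X : ℝ, X = min ((xs α x₁ hα hx0 mrem).1) (gMP α P' - 1) := ⟨_, rfl⟩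
          have hε0 : 0 < ε := by rw [hε]; exact lt_min (xs_pos hα hx0 mrem) (by linarith)
          have hyex : (1+ε) ∈ Ioc (gMP α x₁) (gMP α P') := by
            rw [hfix']
            constructor
            · linarith
            · have : ε ≤ gMP α P' - 1 := by rw [hε]; exact min_le_right _ _
              linarith
          obtain ⟨y, hy, hgy⟩ := intermediate_value_Ioc hqx.le
            ((gMP_cont hα).continuousOn) hyex
          have hpq : p < q := by
            by_contra hh
            push_neg at hh
            have := hmono.monotoneOn hq hp hh
            linarith
          have hyIoc : (1+ε) - 1 = ε := by ring
          -- find w with (MP α)^[j] w = y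
          have hsub2 : Icc p q ⊆ Icc v u := Icc_subset_Icc hp.1 hq.2
          have hymem : y ∈ Ioc ((MP α)^[j] p) ((MP α)^[j] q) := ⟨lt_of_le_of_lt hpx hy.1, hy.2⟩
          obtain ⟨w, hw, hfw⟩ := intermediate_value_Ioc hpq.le (hcont.mono hsub2) hymem
          have hwmem : w ∈ Icc v u := hsub2 (Ioc_subset_Icc_self hw)
          have hy1 : y ≤ 1 := hy.2.trans hP'1
          have hstep : (MP α)^[j+1] w = ε := by
            rw [Function.iterate_succ_apply', hfw, MP_eq_right hα hfix' hx0 hy.1, hgy]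
            ring
          have hiter : (MP α)^[n] w = (MP α)^[mrem] ((MP α)^[j+1] w) := by
            rw [hnm, Function.iterate_add_apply]
          have horb := (orbit_below hα hx0 hfix' mrem ε hε0.le (by rw [hε]; exact min_le_left _ _)).2
          have hcontr := (hzn w hwmem).1
          rw [hiter, hstep] at hcontr
          linarith
      intro j
      induction j with
      | zero =>
        intro hj
        have hid : (MP α)^[0] = id := Function.iterate_zero (MP α)
        have h1 : StrictMonoOn ((MP α)^[0]) (Icc v u) := by rw [hid]; exact fun z _ z' _ h => h
        have h2 : ContinuousOn ((MP α)^[0]) (Icc v u) := by rw [hid]; exact continuousOn_id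
        have h3 : ∀ z ∈ Icc v u, 0 < (MP α)^[0] z ∧ (MP α)^[0] z ≤ 1 := by
          intro z hz
          rw [hid]
          exact ⟨hv0.trans_le hz.1, (hzIcc z hz).2⟩
        exact ⟨⟨h1, h2, h3⟩, sameside 0 hj h1 h2 h3⟩
      | succ j ih =>
        intro hj1
        have hj : j ≤ n := by omega
        obtain ⟨⟨hmono, hcont, hbnd⟩, hside⟩ := ih hj
        have hnew : StrictMonoOn ((MP α)^[j+1]) (Icc v u) ∧
            ContinuousOn ((MP α)^[j+1]) (Icc v u) ∧
            (∀ z ∈ Icc v u, 0 < (MP α)^[j+1] z ∧ (MP α)^[j+1] z ≤ 1) := by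
          rcases hside with hL | hR
          · -- left branch
            have hfeq : ∀ z ∈ Icc v u, (MP α)^[j+1] z = gMP α ((MP α)^[j] z) := by
              intro z hz
              rw [Function.iterate_succ_apply']
              exact MP_eq_left hα hfix' (hbnd z hz).1.le (hL z hz)
            refine ⟨?_, ?_, ?_⟩
            · intro z hz z' hz' hlt
              rw [hfeq z hz, hfeq z' hz']
              exact gMP_strictMono hα (hbnd z hz).1.le (hbnd z' hz').1.le (hmono hz hz' hlt)
            · exact (((gMP_cont hα).comp_continuousOn hcont)).congr hfeq
            · intro z hz
              rw [hfeq z hz]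
              constructor
              · exact gMP_pos (hbnd z hz).1
              · rw [← hfix']
                exact (gMP_strictMono hα).monotoneOn (hbnd z hz).1.le hx0.le (hL z hz)
          · -- right branch
            have hfeq : ∀ z ∈ Icc v u, (MP α)^[j+1] z = gMP α ((MP α)^[j] z) - 1 := by
              intro z hz
              rw [Function.iterate_succ_apply']
              exact MP_eq_right hα hfix' hx0 (hR z hz)
            have hg1 : gMP α 1 = 2 := by
              simp [gMP, Real.one_rpow]
              norm_num
            refine ⟨?_, ?_, ?_⟩
            · intro z hz z' hz' hlt
              rw [hfeq z hz, hfeq z' hz']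
              have := gMP_strictMono hα (hbnd z hz).1.le (hbnd z' hz').1.le (hmono hz hz' hlt)
              linarith
            · exact ((((gMP_cont hα).comp_continuousOn hcont)).sub continuousOn_const).congr hfeq
            · intro z hz
              rw [hfeq z hz]
              constructor
              · have : 1 < gMP α ((MP α)^[j] z) := by
                  rw [← hfix']
                  exact gMP_strictMono hα hx0.le (hbnd z hz).1.le (hR z hz)
                linarith
              · have : gMP α ((MP α)^[j] z) ≤ gMP α 1 := by
                  apply (gMP_strictMono hα).monotoneOn (hbnd z hz).1.le (by norm_num)
                    (hbnd z hz).2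
                rw [hg1] at this
                linarith
        exact ⟨hnew, sameside (j+1) hj1 hnew.1 hnew.2.1 hnew.2.2⟩
    -- trivial case u = v
    rcases eq_or_lt_of_le hvu with rfl | hvltu
    · have hD0 : (0:ℝ) < K * (A*B) + 1 := by
        nlinarith only [mul_pos hK0 (mul_pos (lt_of_lt_of_le one_pos hA1) hB0)]
      have : (0:ℝ) ≤ (K * (A*B) + 1) * M := mul_nonneg hD0.le hMnn
      simpa using this
    -- first-passage times
    have hmex : ∀ j, j ≤ n → ∃ k, (j ≤ k ∧ k ≤ n) ∧ x₁ < (MP α)^[k] u :=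
      fun j hj => ⟨n, ⟨hj, le_rfl⟩, (hzn u hmemu).1⟩
    obtain ⟨m, hm⟩ : ∃ m : ℕ → ℕ, m = fun j =>
        if h : ∃ k, (j ≤ k ∧ k ≤ n) ∧ x₁ < (MP α)^[k] u then Nat.find h else 0 := ⟨_, rfl⟩
    have hmspec : ∀ j, j ≤ n → (j ≤ m j ∧ m j ≤ n) ∧ x₁ < (MP α)^[m j] u := by
      intro j hj
      rw [hm]
      simp only [dif_pos (hmex j hj)]
      exact Nat.find_spec (hmex j hj)
    have hmmin : ∀ j, j ≤ n → ∀ k, j ≤ k → k < m j → (MP α)^[k] u ≤ x₁ := by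
      intro j hj k hjk hk
      have hkn : k ≤ n := by
        have h3 := (hmspec j hj).1.2
        omega
      have hmj : m j = Nat.find (hmex j hj) := by
        rw [hm]; simp only [dif_pos (hmex j hj)]
      rw [hmj] at hk
      have h2 := Nat.find_min (hmex j hj) hk
      push_neg at h2
      exact h2 ⟨hjk, hkn⟩
    have hmleast : ∀ j, j ≤ n → ∀ k, j ≤ k → k ≤ n → x₁ < (MP α)^[k] u → m j ≤ k := by
      intro j hj k h1 h2 h3
      by_contra hh
      push_neg at hh
      exact absurd h3 (not_lt.mpr (hmmin j hj k h1 hh))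
    -- return counts
    obtain ⟨R, hR⟩ : ∃ R : ℕ → ℕ, R = fun j =>
        ((Finset.Ico j n).filter (fun k => x₁ < (MP α)^[k] u)).card := ⟨_, rfl⟩
    have hRn : ∀ j, R j ≤ n := by
      intro j; rw [hR]
      calc ((Finset.Ico j n).filter (fun k => x₁ < (MP α)^[k] u)).card
          ≤ (Finset.Ico j n).card := Finset.card_filter_le _ _
      _ = n - j := Nat.card_Ico j n
      _ ≤ n := Nat.sub_le _ _
    have hRsplit : ∀ j1 j2, j1 ≤ j2 → j2 ≤ n →
        R j1 = ((Finset.Ico j1 j2).filter (fun k => x₁ < (MP α)^[k] u)).card + R j2 := by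
      intro j1 j2 h12 h2n
      rw [hR]
      simp only
      rw [← Finset.Ico_union_Ico_eq_Ico h12 h2n, Finset.filter_union,
        Finset.card_union_of_disjoint
          (Finset.disjoint_filter_filter (Finset.Ico_disjoint_Ico_consecutive _ _ _))]
    have hRstep : ∀ j, j < n → R j = (if x₁ < (MP α)^[j] u then 1 else 0) + R (j+1) := by
      intro j hj
      rw [hRsplit j (j+1) (by omega) (by omega)]
      congr 1
      rw [Nat.Ico_succ_singleton, Finset.filter_singleton]
      split_ifs <;> simp
    -- expansion of differences
    have hdgrow : ∀ t j, j + t = n →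
        ((MP α)^[j] u - (MP α)^[j] v) * lam ^ (R j) ≤ (MP α)^[n] u - (MP α)^[n] v := by
      intro t
      induction t with
      | zero =>
        intro j hj
        have hjn : j = n := by omega
        subst hjn
        have hR0 : R j = 0 := by rw [hR]; simp
        rw [hR0, pow_zero, mul_one]
      | succ t ih =>
        intro j hj
        have hjn : j < n := by omega
        have hjn' : j ≤ n := by omega
        have hbu := ((main j hjn').1.2.2 u hmemu)
        have hbv := ((main j hjn').1.2.2 v hmemv)
        have hmono := (main j hjn').1.1
        have hlt : (MP α)^[j] v < (MP α)^[j] u := hmono hmemv hmemu hvltu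
        have hpow : (0:ℝ) < lam ^ (R (j+1)) := pow_pos (by linarith) _
        have hIH := ih (j+1) (by omega)
        have hslope := gMP_slope hα hbv.1 hlt.le
        rcases (main j hjn').2 with hL | hR'
        · have hstepu : (MP α)^[j+1] u = gMP α ((MP α)^[j] u) := by
            rw [Function.iterate_succ_apply']
            exact MP_eq_left hα hfix' hbu.1.le (hL u hmemu)
          have hstepv : (MP α)^[j+1] v = gMP α ((MP α)^[j] v) := by
            rw [Function.iterate_succ_apply']
            exact MP_eq_left hα hfix' hbv.1.le (hL v hmemv)
          have hfac : (1:ℝ) ≤ 1 + (1+α) * ((MP α)^[j] v) ^ α := by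
            nlinarith only [Real.rpow_nonneg hbv.1.le α, hα]
          have hd1 : (MP α)^[j] u - (MP α)^[j] v ≤ (MP α)^[j+1] u - (MP α)^[j+1] v := by
            rw [hstepu, hstepv]
            nlinarith only [hslope, hfac, sub_pos.mpr hlt]
          have hReq : R j = R (j+1) := by
            rw [hRstep j hjn, if_neg (not_lt.mpr (hL u hmemu))]
            omega
          rw [hReq]
          calc ((MP α)^[j] u - (MP α)^[j] v) * lam ^ (R (j+1))
              ≤ ((MP α)^[j+1] u - (MP α)^[j+1] v) * lam ^ (R (j+1)) :=
                mul_le_mul_of_nonneg_right hd1 hpow.le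
          _ ≤ _ := hIH
        · have hstepu : (MP α)^[j+1] u = gMP α ((MP α)^[j] u) - 1 := by
            rw [Function.iterate_succ_apply']
            exact MP_eq_right hα hfix' hx0 (hR' u hmemu)
          have hstepv : (MP α)^[j+1] v = gMP α ((MP α)^[j] v) - 1 := by
            rw [Function.iterate_succ_apply']
            exact MP_eq_right hα hfix' hx0 (hR' v hmemv)
          have hxa : x₁ ^ α ≤ ((MP α)^[j] v) ^ α :=
            Real.rpow_le_rpow hx0.le (hR' v hmemv).le hα.le
          have hfac : lam ≤ 1 + (1+α) * ((MP α)^[j] v) ^ α := by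
            rw [hlam]; nlinarith only [hxa, hα]
          have hd1 : lam * ((MP α)^[j] u - (MP α)^[j] v) ≤ (MP α)^[j+1] u - (MP α)^[j+1] v := by
            rw [hstepu, hstepv]
            nlinarith only [hslope, hfac, sub_pos.mpr hlt, hlam1]
          have hReq : R j = 1 + R (j+1) := by
            rw [hRstep j hjn, if_pos (hR' u hmemu)]
          rw [hReq, pow_add, pow_one]
          calc ((MP α)^[j] u - (MP α)^[j] v) * (lam * lam ^ (R (j+1)))
              = (lam * ((MP α)^[j] u - (MP α)^[j] v)) * lam ^ (R (j+1)) := by ring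
          _ ≤ ((MP α)^[j+1] u - (MP α)^[j+1] v) * lam ^ (R (j+1)) :=
                mul_le_mul_of_nonneg_right hd1 hpow.le
          _ ≤ _ := hIH
    have hdbound : ∀ j, j ≤ n → (MP α)^[j] u - (MP α)^[j] v ≤ mu0 ^ (R j) := by
      intro j hj
      have hgr := hdgrow (n - j) j (by omega)
      have hdn : (MP α)^[n] u - (MP α)^[n] v ≤ 1 := by
        have h1 := ((main n le_rfl).1.2.2 u hmemu).2
        have h2 := ((main n le_rfl).1.2.2 v hmemv).1
        linarith
      have hpow : (0:ℝ) < lam ^ (R j) := pow_pos (by linarith) _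
      rw [hmu0, inv_pow, ← one_div, le_div_iff₀ hpow]
      linarith only [hgr, hdn]
    -- escape interval bounds
    have hescape : ∀ j, j ≤ n → (MP α)^[j] u ≤ x₁ →
        (1 ≤ m j - j) ∧
        ((xs α x₁ hα hx0 (m j - j)).1 < (MP α)^[j] v ∧
          (MP α)^[j] u ≤ (xs α x₁ hα hx0 (m j - j - 1)).1) := by
      intro j hj hleftu
      obtain ⟨⟨hjm, hmn⟩, hmx⟩ := hmspec j hj
      have hmj : j < m j := by
        rcases eq_or_lt_of_le hjm with heq | h
        · exfalso; rw [← heq] at hmx; linarith only [hmx, hleftu]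
        · exact h
      have hL1 : 1 ≤ m j - j := by omega
      refine ⟨hL1, ?_, ?_⟩
      · by_contra hh
        push_neg at hh
        have hbv0 := ((main j hj).1.2.2 v hmemv).1
        have horb := (orbit_below hα hx0 hfix' (m j - j) ((MP α)^[j] v) hbv0.le hh).2
        rw [← Function.iterate_add_apply] at horb
        rw [show m j - j + j = m j by omega] at horb
        rcases (main (m j) hmn).2 with hL' | hR'
        · exact absurd hmx (not_lt.mpr (hL' u hmemu))
        · exact absurd horb (not_le.mpr (hR' v hmemv))
      · by_contra hh
        push_neg at hh
        have hyp : ∀ i, i < m j - j - 1 → (MP α)^[i] ((MP α)^[j] u) ≤ x₁ := by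
          intro i hi
          rw [← Function.iterate_add_apply]
          exact hmmin j hj (i + j) (by omega) (by omega)
        have hab := orbit_above hα hx0 hfix' (m j - j - 1) ((MP α)^[j] u) hh hyp
        rw [← Function.iterate_add_apply] at hab
        rw [show m j - j - 1 + j = m j - 1 by omega] at hab
        have := hmmin j hj (m j - 1) (by omega) (by omega)
        linarith only [hab, this]
    -- levels
    obtain ⟨lv, hlv⟩ : ∃ lv : ℕ → ℕ, lv = fun j =>
        if x₁ < (MP α)^[j] u then 0 else m j - j := ⟨_, rfl⟩
    have hlvn : ∀ j, j ≤ n → lv j ≤ n := by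
      intro j hj; rw [hlv]; simp only
      split_ifs
      · omega
      · have := (hmspec j hj).1.2; omega
    obtain ⟨glf, hglf⟩ : ∃ glf : ℕ → ℝ, glf = fun L =>
        if L = 0 then 1 else ((xs α x₁ hα hx0 L).1)^α * ((xs α x₁ hα hx0 L).1)^gb := ⟨_, rfl⟩
    have hglf0 : ∀ L, 0 ≤ glf L := by
      intro L; rw [hglf]; simp only; split_ifs
      · norm_num
      · have h1 := xs_pos hα hx0 L
        have h2 := Real.rpow_nonneg h1.le α
        have h3 := Real.rpow_nonneg h1.le gb
        exact mul_nonneg h2 h3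
    -- the per-step bound
    have hEb : ∀ j, j < n →
        ((MP α)^[j] u)^γ - ((MP α)^[j] v)^γ ≤ K * (glf (lv j) ^ (1-th) * mu2 ^ (R j)) := by
      intro j hj
      have hjn : j ≤ n := hj.le
      have hbu := ((main j hjn).1.2.2 u hmemu)
      have hbv := ((main j hjn).1.2.2 v hmemv)
      have hba : (MP α)^[j] v ≤ (MP α)^[j] u := ((main j hjn).1.1 hmemv hmemu hvltu).le
      have hE0 : 0 ≤ ((MP α)^[j] u)^γ - ((MP α)^[j] v)^γ :=
        sub_nonneg.mpr (Real.rpow_le_rpow hbv.1.le hba hγ.le)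
      have hd := hdbound j hjn
      have hd0 : (0:ℝ) ≤ (MP α)^[j] u - (MP α)^[j] v := by linarith
      have hmu1R : (0:ℝ) ≤ mu1 ^ (R j) := pow_nonneg hmu10.le _
      have boundB : ((MP α)^[j] u)^γ - ((MP α)^[j] v)^γ ≤ K * mu1 ^ (R j) := by
        rcases le_total γ 1 with hγle | hγge
        · have hgbγ : gb = γ := by rw [hgb]; exact min_eq_left hγle
          have h1 := rpow_sub_le_sub_rpow hγ.le hγle hbv.1.le hba
          have h2 : ((MP α)^[j] u - (MP α)^[j] v)^γ ≤ (mu0 ^ (R j))^γ :=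
            Real.rpow_le_rpow hd0 hd hγ.le
          have h3 : ((mu0 ^ (R j) : ℝ))^γ = (mu0^γ)^(R j) := npow_rpow hmu00.le _ _
          have h4 : mu1 ^ (R j) = (mu0^γ)^(R j) := by rw [hmu1, hgbγ]
          calc ((MP α)^[j] u)^γ - ((MP α)^[j] v)^γ ≤ (mu0 ^ (R j))^γ := h1.trans h2
          _ = mu1 ^ (R j) := by rw [h3, ← h4]
          _ ≤ K * mu1 ^ (R j) := by nlinarith only [hmu1R, hK1]
        · have hgbγ : gb = 1 := by rw [hgb]; exact min_eq_right hγge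
          have hKγ' : K = γ := by rw [hK]; exact max_eq_left hγge
          have h1 := rpow_sub_le_one_mul hγge hbv.1.le hba hbu.2
          have hmm : mu1 = mu0 := by rw [hmu1, hgbγ, Real.rpow_one]
          calc ((MP α)^[j] u)^γ - ((MP α)^[j] v)^γ ≤ γ * ((MP α)^[j] u - (MP α)^[j] v) := h1
          _ ≤ γ * mu0 ^ (R j) := mul_le_mul_of_nonneg_left hd hγ.le
          _ = K * mu1 ^ (R j) := by rw [hKγ', hmm]
      have boundG : ((MP α)^[j] u)^γ - ((MP α)^[j] v)^γ ≤ K * glf (lv j) := by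
        rcases lt_or_ge x₁ ((MP α)^[j] u) with hright | hleft
        · have hlv0 : lv j = 0 := by rw [hlv]; simp [hright]
          have h1 : ((MP α)^[j] u)^γ ≤ 1 := Real.rpow_le_one hbu.1.le hbu.2 hγ.le
          have h2 : 0 ≤ ((MP α)^[j] v)^γ := Real.rpow_nonneg hbv.1.le _
          have hglfv : glf 0 = 1 := by rw [hglf]; simp
          rw [hlv0, hglfv]
          nlinarith only [h1, h2, hK1]
        · have hesc := hescape j hjn hleft
          have hlvL : lv j = m j - j := by rw [hlv]; simp [not_lt.mpr hleft]
          have hL1 : 1 ≤ m j - j := hesc.1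
          have hxlt := hesc.2.1
          have hxgt := hesc.2.2
          have hxpos : 0 < (xs α x₁ hα hx0 (m j - j)).1 := xs_pos hα hx0 _
          have hgap : (MP α)^[j] u - (MP α)^[j] v ≤
              (xs α x₁ hα hx0 (m j - j)).1 * ((xs α x₁ hα hx0 (m j - j)).1)^α := by
            have hgx : gMP α (xs α x₁ hα hx0 (m j - j)).1 = (xs α x₁ hα hx0 (m j - j - 1)).1 := by
              have h := xs_succ_g hα hx0 (m j - j - 1)
              rw [show m j - j - 1 + 1 = m j - j by omega] at h
              exact h
            have hss := gMP_sub_self (α := α) ((xs α x₁ hα hx0 (m j - j)).1)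
            rw [hgx] at hss
            linarith only [hss, hxgt, hxlt, hba]
          have hglfv : glf (m j - j) = ((xs α x₁ hα hx0 (m j - j)).1)^α *
              ((xs α x₁ hα hx0 (m j - j)).1)^gb := by
            rw [hglf]; simp only; rw [if_neg (by omega)]
          rw [hlvL, hglfv]
          have hxα : (0:ℝ) ≤ ((xs α x₁ hα hx0 (m j - j)).1)^α :=
            Real.rpow_nonneg hxpos.le _
          rcases le_total γ 1 with hγle | hγge
          · have hgbγ : gb = γ := by rw [hgb]; exact min_eq_left hγle
            have h1 := rpow_sub_le_of_exp_le_one hγ hγle hxpos hxlt.le hba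
            have h2 : ((xs α x₁ hα hx0 (m j - j)).1)^(γ-1) * (xs α x₁ hα hx0 (m j - j)).1
                = ((xs α x₁ hα hx0 (m j - j)).1)^γ := by
              nth_rewrite 2 [← Real.rpow_one ((xs α x₁ hα hx0 (m j - j)).1)]
              rw [← Real.rpow_add hxpos]
              norm_num
            have h3 : (0:ℝ) ≤ ((xs α x₁ hα hx0 (m j - j)).1)^(γ-1) :=
              Real.rpow_nonneg hxpos.le _
            calc ((MP α)^[j] u)^γ - ((MP α)^[j] v)^γ
                ≤ γ * ((xs α x₁ hα hx0 (m j - j)).1)^(γ-1) *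
                  ((MP α)^[j] u - (MP α)^[j] v) := h1
            _ ≤ γ * ((xs α x₁ hα hx0 (m j - j)).1)^(γ-1) *
                  ((xs α x₁ hα hx0 (m j - j)).1 * ((xs α x₁ hα hx0 (m j - j)).1)^α) := by
                apply mul_le_mul_of_nonneg_left hgap
                positivity
            _ = γ * (((xs α x₁ hα hx0 (m j - j)).1)^α * ((xs α x₁ hα hx0 (m j - j)).1)^γ) := by
                rw [← h2]; ring
            _ ≤ K * (((xs α x₁ hα hx0 (m j - j)).1)^α * ((xs α x₁ hα hx0 (m j - j)).1)^gb) := by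
                rw [hgbγ]
                apply mul_le_mul_of_nonneg_right hKγ
                positivity
          · have hgbγ : gb = 1 := by rw [hgb]; exact min_eq_right hγge
            have h1 := rpow_sub_le_one_mul hγge hbv.1.le hba hbu.2
            calc ((MP α)^[j] u)^γ - ((MP α)^[j] v)^γ
                ≤ γ * ((MP α)^[j] u - (MP α)^[j] v) := h1
            _ ≤ γ * ((xs α x₁ hα hx0 (m j - j)).1 * ((xs α x₁ hα hx0 (m j - j)).1)^α) :=
                mul_le_mul_of_nonneg_left hgap hγ.le
            _ = γ * (((xs α x₁ hα hx0 (m j - j)).1)^α * ((xs α x₁ hα hx0 (m j - j)).1)^gb) := by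
                rw [hgbγ, Real.rpow_one]; ring
            _ ≤ K * (((xs α x₁ hα hx0 (m j - j)).1)^α * ((xs α x₁ hα hx0 (m j - j)).1)^gb) := by
                apply mul_le_mul_of_nonneg_right hKγ
                have := Real.rpow_nonneg hxpos.le gb
                positivity
      have hcomb := min_interp hE0 boundG boundB hth0.le hth1
      have e1 : (K * glf (lv j))^(1-th) = K^(1-th) * glf (lv j)^(1-th) :=
        Real.mul_rpow hK0.le (hglf0 (lv j))
      have e2 : (K * mu1 ^ (R j))^th = K^th * (mu1 ^ (R j))^th :=
        Real.mul_rpow hK0.le hmu1R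
      have e3 : ((mu1 ^ (R j) : ℝ))^th = mu2 ^ (R j) := by rw [npow_rpow hmu10.le, hmu2]
      have e4 : K^(1-th) * K^th = K := by
        rw [← Real.rpow_add hK0, sub_add_cancel, Real.rpow_one]
      calc ((MP α)^[j] u)^γ - ((MP α)^[j] v)^γ
          ≤ (K * glf (lv j))^(1-th) * (K * mu1 ^ (R j))^th := hcomb
      _ = (K^(1-th) * K^th) * (glf (lv j)^(1-th) * mu2 ^ (R j)) := by
          rw [e1, e2, e3]; ring
      _ = K * (glf (lv j)^(1-th) * mu2 ^ (R j)) := by rw [e4]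
    -- injectivity of j ↦ (lv j, R j)
    have hinj : ∀ j1 ∈ Finset.range n, ∀ j2 ∈ Finset.range n,
        (lv j1, R j1) = (lv j2, R j2) → j1 = j2 := by
      have key2 : ∀ j1 j2, j1 < j2 → j2 ≤ n → lv j1 = lv j2 → R j1 = R j2 → False := by
        intro j1 j2 h12 h2n hlveq hReq
        have hj1n : j1 ≤ n := by omega
        have hfilt : ∀ k, j1 ≤ k → k < j2 → (MP α)^[k] u ≤ x₁ := by
          have hsplit := hRsplit j1 j2 h12.le h2n
          rw [hReq] at hsplit
          have hcard : ((Finset.Ico j1 j2).filter (fun k => x₁ < (MP α)^[k] u)).card = 0 := by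
            omega
          rw [Finset.card_eq_zero] at hcard
          intro k h1 h2
          by_contra hcc
          push_neg at hcc
          have hmem : k ∈ (Finset.Ico j1 j2).filter (fun k => x₁ < (MP α)^[k] u) := by
            rw [Finset.mem_filter, Finset.mem_Ico]; exact ⟨⟨h1, h2⟩, hcc⟩
          rw [hcard] at hmem
          exact absurd hmem (Finset.notMem_empty k)
        have hleft1 : (MP α)^[j1] u ≤ x₁ := hfilt j1 le_rfl h12
        have hlv1 : lv j1 = m j1 - j1 := by rw [hlv]; simp [not_lt.mpr hleft1]
        have hm1 : j1 < m j1 := by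
          rcases eq_or_lt_of_le (hmspec j1 hj1n).1.1 with heq | h
          · exfalso
            have := (hmspec j1 hj1n).2
            rw [← heq] at this
            linarith
          · exact h
        have hlv2ne : lv j2 ≠ 0 := by rw [← hlveq, hlv1]; omega
        have hleft2 : (MP α)^[j2] u ≤ x₁ := by
          by_contra hcc
          push_neg at hcc
          rw [hlv] at hlv2ne
          simp [hcc] at hlv2ne
        have hlv2 : lv j2 = m j2 - j2 := by rw [hlv]; simp [not_lt.mpr hleft2]
        have hmge : j2 ≤ m j1 := by
          by_contra hcc
          push_neg at hcc
          exact absurd (hmspec j1 hj1n).2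
            (not_lt.mpr (hfilt (m j1) (hmspec j1 hj1n).1.1 hcc))
        have h12' : m j1 ≤ m j2 :=
          hmleast j1 hj1n (m j2) (by have := (hmspec j2 h2n).1.1; omega)
            (hmspec j2 h2n).1.2 (hmspec j2 h2n).2
        have h21' : m j2 ≤ m j1 :=
          hmleast j2 h2n (m j1) hmge (hmspec j1 hj1n).1.2 (hmspec j1 hj1n).2
        rw [hlv1, hlv2] at hlveq
        omega
      intro j1 hj1 j2 hj2 heq
      rw [Finset.mem_range] at hj1 hj2
      rcases lt_trichotomy j1 j2 with h | h | h
      · exact (key2 j1 j2 h (by omega) (congrArg Prod.fst heq) (congrArg Prod.snd heq)).elim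
      · exact h
      · exact (key2 j2 j1 h (by omega) (congrArg Prod.fst heq).symm
          (congrArg Prod.snd heq).symm).elim
    -- summation
    have hsum0 : ∑ j ∈ Finset.range n, (((MP α)^[j] u)^γ - ((MP α)^[j] v)^γ)
        ≤ K * ((∑ L ∈ Finset.range (n+1), glf L ^ (1-th)) *
            (∑ r ∈ Finset.range (n+1), mu2 ^ r)) := by
      have step1 : ∑ j ∈ Finset.range n, (((MP α)^[j] u)^γ - ((MP α)^[j] v)^γ)
          ≤ ∑ j ∈ Finset.range n, K * (glf (lv j) ^ (1-th) * mu2 ^ (R j)) :=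
        Finset.sum_le_sum (fun j hj => hEb j (Finset.mem_range.mp hj))
      have step3 : ∑ j ∈ Finset.range n, (glf (lv j) ^ (1-th) * mu2 ^ (R j))
          ≤ ∑ p ∈ Finset.range (n+1) ×ˢ Finset.range (n+1), glf p.1 ^ (1-th) * mu2 ^ p.2 := by
        rw [← Finset.sum_image (f := fun p : ℕ × ℕ => glf p.1 ^ (1-th) * mu2 ^ p.2)
          (g := fun j => (lv j, R j)) hinj]
        apply Finset.sum_le_sum_of_subset_of_nonneg
        · intro p hp
          rw [Finset.mem_image] at hp
          obtain ⟨j, hjmem, hpj⟩ := hp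
          rw [Finset.mem_range] at hjmem
          rw [← hpj, Finset.mem_product, Finset.mem_range, Finset.mem_range]
          constructor
          · have := hlvn j (by omega); omega
          · have := hRn j; omega
        · intro p _ _
          exact mul_nonneg (Real.rpow_nonneg (hglf0 p.1) _) (pow_nonneg hmu20.le _)
      have step4 : ∑ p ∈ Finset.range (n+1) ×ˢ Finset.range (n+1),
            glf p.1 ^ (1-th) * mu2 ^ p.2
          = (∑ L ∈ Finset.range (n+1), glf L ^ (1-th)) *
            (∑ r ∈ Finset.range (n+1), mu2 ^ r) := by
        rw [Finset.sum_mul_sum, Finset.sum_product]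
      calc ∑ j ∈ Finset.range n, (((MP α)^[j] u)^γ - ((MP α)^[j] v)^γ)
          ≤ ∑ j ∈ Finset.range n, K * (glf (lv j) ^ (1-th) * mu2 ^ (R j)) := step1
      _ = K * ∑ j ∈ Finset.range n, (glf (lv j) ^ (1-th) * mu2 ^ (R j)) := by
          rw [Finset.mul_sum]
      _ ≤ K * ((∑ L ∈ Finset.range (n+1), glf L ^ (1-th)) *
            (∑ r ∈ Finset.range (n+1), mu2 ^ r)) := by
          apply mul_le_mul_of_nonneg_left _ hK0.le
          rw [← step4]
          exact step3
    -- bounding the geometric sum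
    have hsumB : ∑ r ∈ Finset.range (n+1), mu2 ^ r ≤ B := by
      rw [hB]
      exact geom_bound hmu20.le hmu21 _
    have hsumB0 : (0:ℝ) ≤ ∑ r ∈ Finset.range (n+1), mu2 ^ r :=
      Finset.sum_nonneg (fun r _ => pow_nonneg hmu20.le r)
    -- bounding the glf sum
    have hsumA : ∑ L ∈ Finset.range (n+1), glf L ^ (1-th) ≤ A := by
      rw [Finset.sum_range_succ']
      have hglf0v : glf 0 ^ (1-th) = 1 := by
        rw [hglf]; simp only [if_pos rfl]; exact Real.one_rpow _
      have hterm : ∀ L : ℕ, glf (L+1) ^ (1-th) ≤ CA * (((L:ℝ)+1))^(-sS) := by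
        intro L
        have hxp := xs_pos hα hx0 (L+1)
        have hcomb : glf (L+1) = ((xs α x₁ hα hx0 (L+1)).1)^(α+gb) := by
          rw [hglf]; simp only [Nat.succ_ne_zero, if_false]
          rw [Real.rpow_add hxp]
        have e1 : glf (L+1) ^ (1-th) = (((xs α x₁ hα hx0 (L+1)).1)^α)^sS := by
          rw [hcomb, ← Real.rpow_mul hxp.le, hsexp, mul_comm sS α, Real.rpow_mul hxp.le]
        have e2 : (((xs α x₁ hα hx0 (L+1)).1)^α)^sS ≤ ((cb * ((L:ℝ)+1))⁻¹)^sS := by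
          apply Real.rpow_le_rpow (Real.rpow_nonneg hxp.le α) _ (by linarith)
          have h := xs_alpha_le hα hx0 hx11.le (L+1) (by omega)
          rw [hcb]
          convert h using 2
          push_cast
          ring
        have hLpos : (0:ℝ) < (L:ℝ)+1 := by positivity
        have e3 : ((cb * ((L:ℝ)+1))⁻¹)^sS = CA * (((L:ℝ)+1))^(-sS) := by
          rw [mul_inv, Real.mul_rpow (inv_nonneg.mpr hcb0.le) (inv_nonneg.mpr hLpos.le),
            hCA, Real.inv_rpow hLpos.le, ← Real.rpow_neg hLpos.le]
        calc glf (L+1) ^ (1-th) = (((xs α x₁ hα hx0 (L+1)).1)^α)^sS := e1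
        _ ≤ ((cb * ((L:ℝ)+1))⁻¹)^sS := e2
        _ = CA * (((L:ℝ)+1))^(-sS) := e3
      have hsp := sumpow hs1 n
      have hsum1 : ∑ L ∈ Finset.range n, glf (L+1) ^ (1-th)
          ≤ CA * (1 + (sS-1)⁻¹) := by
        calc ∑ L ∈ Finset.range n, glf (L+1) ^ (1-th)
            ≤ ∑ L ∈ Finset.range n, CA * (((L:ℝ)+1))^(-sS) :=
              Finset.sum_le_sum (fun L _ => hterm L)
        _ = CA * ∑ L ∈ Finset.range n, (((L:ℝ)+1))^(-sS) := by rw [Finset.mul_sum]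
        _ ≤ CA * (1 + (sS-1)⁻¹) := mul_le_mul_of_nonneg_left hsp hCA0
      rw [hA, hglf0v]
      linarith only [hsum1]
    have hsumA0 : (0:ℝ) ≤ ∑ L ∈ Finset.range (n+1), glf L ^ (1-th) :=
      Finset.sum_nonneg (fun L _ => Real.rpow_nonneg (hglf0 L) _)
    -- conclusion
    have hphi : ∀ j ∈ Finset.range n, |φ ((MP α)^[j] u) - φ ((MP α)^[j] v)| ≤
        M * (((MP α)^[j] u)^γ - ((MP α)^[j] v)^γ) := by
      intro j hj
      have hjn : j ≤ n := (Finset.mem_range.mp hj).le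
      exact phi_bound hγ φ φ' hφc hφd hM ((main j hjn).1.2.2 v hmemv).1
        (((main j hjn).1.1 hmemv hmemu hvltu)).le ((main j hjn).1.2.2 u hmemu).2
    calc |∑ j ∈ Finset.range n, φ ((MP α)^[j] u) - ∑ j ∈ Finset.range n, φ ((MP α)^[j] v)|
        = |∑ j ∈ Finset.range n, (φ ((MP α)^[j] u) - φ ((MP α)^[j] v))| := by
          rw [Finset.sum_sub_distrib]
    _ ≤ ∑ j ∈ Finset.range n, |φ ((MP α)^[j] u) - φ ((MP α)^[j] v)| :=
          Finset.abs_sum_le_sum_abs _ _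
    _ ≤ ∑ j ∈ Finset.range n, M * (((MP α)^[j] u)^γ - ((MP α)^[j] v)^γ) :=
          Finset.sum_le_sum hphi
    _ = M * ∑ j ∈ Finset.range n, (((MP α)^[j] u)^γ - ((MP α)^[j] v)^γ) := by
          rw [Finset.mul_sum]
    _ ≤ M * (K * ((∑ L ∈ Finset.range (n+1), glf L ^ (1-th)) *
            (∑ r ∈ Finset.range (n+1), mu2 ^ r))) :=
          mul_le_mul_of_nonneg_left hsum0 hMnn
    _ ≤ (K * (A*B) + 1) * M := by
          have h1 : (∑ L ∈ Finset.range (n+1), glf L ^ (1-th)) *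
              (∑ r ∈ Finset.range (n+1), mu2 ^ r) ≤ A * B := by
            apply mul_le_mul hsumA hsumB hsumB0 (by linarith)
          have h2 : K * ((∑ L ∈ Finset.range (n+1), glf L ^ (1-th)) *
              (∑ r ∈ Finset.range (n+1), mu2 ^ r)) ≤ K * (A*B) :=
            mul_le_mul_of_nonneg_left h1 hK0.le
          have h3 := mul_le_mul_of_nonneg_left h2 hMnn
          nlinarith only [h3, hMnn]

  rcases le_total vv uu with h | h
  · exact key uu vv huu hvv h
  · rw [abs_sub_comm]
    exact key vv uu hvv huu h
end

section
/- Let (X, 𝓑, μ) be a probability space and T : X → X an ergodic measure-preserving map. For every integrable function φ : X → ℝ with ∫φ dμ = 0, for μ-almost every x ∈ X one has limsup_{n→∞} S_n φ(x) ≥ 0, where S_n φ = Σ_{j=0}^{n−1} φ ∘ T^j. -/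
open Real Set Filter Topology MeasureTheory Function

noncomputable def garsiaA {X : Type*} (T : X → X) (g : X → ℝ) : ℕ → X → ℝ
  | 0 => g
  | (N+1) => fun x => g x + max (garsiaA T g N (T x)) 0

section aux
variable {X : Type*} [MeasurableSpace X] {μ : Measure X} {T : X → X} {g : X → ℝ}

lemma measurable_birkhoffSum' (hT : Measurable T) (hg : Measurable g) (n : ℕ) :
    Measurable (fun x => birkhoffSum T g n x) := by
  apply Finset.measurable_sum
  exact fun j _ => hg.comp (hT.iterate j)

lemma integrable_birkhoffSum' (hTm : MeasurePreserving T μ μ) (hg : Integrable g μ) (n : ℕ) :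
    Integrable (fun x => birkhoffSum T g n x) μ := by
  apply integrable_finset_sum
  intro j _
  exact ((hTm.iterate j).integrable_comp hg.aestronglyMeasurable).mpr hg

lemma measurable_garsiaA' (hT : Measurable T) (hg : Measurable g) (N : ℕ) :
    Measurable (garsiaA T g N) := by
  induction N with
  | zero => exact hg
  | succ N ih => exact hg.add ((ih.comp hT).max measurable_const)

lemma integrable_garsiaA' (hTm : MeasurePreserving T μ μ) (hg : Measurable g)
    (hgi : Integrable g μ) (N : ℕ) : Integrable (garsiaA T g N) μ := by
  induction N with
  | zero => exact hgi
  | succ N ih =>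
    refine hgi.add ?_
    have h1 : Integrable (fun y => max (garsiaA T g N y) 0) μ := ih.pos_part
    exact (hTm.integrable_comp h1.aestronglyMeasurable).mpr h1

omit [MeasurableSpace X] in
lemma garsiaA_mono' (x : X) (N : ℕ) : garsiaA T g N x ≤ garsiaA T g (N+1) x := by
  suffices h : ∀ N, ∀ x : X, garsiaA T g N x ≤ garsiaA T g (N+1) x from h N x
  intro N
  induction N with
  | zero =>
    intro x
    show g x ≤ g x + max (garsiaA T g 0 (T x)) 0
    have := le_max_right (garsiaA T g 0 (T x)) 0
    linarith
  | succ N ih =>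
    intro x
    show g x + max (garsiaA T g N (T x)) 0 ≤ g x + max (garsiaA T g (N+1) (T x)) 0
    have := ih (T x)
    gcongr

omit [MeasurableSpace X] in
lemma garsiaA_spec1' : ∀ N, ∀ c : ℝ, ∀ x : X, c < garsiaA T g N x →
    ∃ n, 0 < n ∧ c < birkhoffSum T g n x := by
  intro N
  induction N with
  | zero =>
    intro c x h
    exact ⟨1, one_pos, by simpa [birkhoffSum_one, garsiaA] using h⟩
  | succ N ih =>
    intro c x h
    replace h : c < g x + max (garsiaA T g N (T x)) 0 := h
    rcases le_or_gt (garsiaA T g N (T x)) 0 with h2 | h2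
    · rw [max_eq_right h2] at h
      exact ⟨1, one_pos, by simpa [birkhoffSum_one] using h⟩
    · rw [max_eq_left h2.le] at h
      obtain ⟨m, hm1, hm⟩ := ih (c - g x) (T x) (by linarith)
      refine ⟨m + 1, Nat.succ_pos _, ?_⟩
      rw [birkhoffSum_succ']
      linarith

omit [MeasurableSpace X] in
lemma garsiaA_spec2' : ∀ N, ∀ x : X, birkhoffSum T g (N + 1) x ≤ garsiaA T g N x := by
  intro N
  induction N with
  | zero => intro x; simp [birkhoffSum_one, garsiaA]
  | succ N ih =>
    intro x
    rw [birkhoffSum_succ']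
    have h1 := ih (T x)
    have h2 := le_max_left (garsiaA T g N (T x)) 0
    show _ ≤ g x + max (garsiaA T g N (T x)) 0
    linarith

theorem maximal_ergodic (hTm : MeasurePreserving T μ μ) (hg : Measurable g)
    (hgi : Integrable g μ) :
    0 ≤ ∫ x in {x | ∃ n, 0 < n ∧ 0 < birkhoffSum T g n x}, g x ∂μ := by
  have hTmeas : Measurable T := hTm.measurable
  set E : ℕ → Set X := fun N => {x | 0 < garsiaA T g N x} with hE
  have hEmeas : ∀ N, MeasurableSet (E N) :=
    fun N => measurableSet_lt measurable_const (measurable_garsiaA' hTmeas hg N)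
  have hmono : Monotone E := by
    apply monotone_nat_of_le_succ
    intro N x hx
    exact lt_of_lt_of_le hx (garsiaA_mono' x N)
  have hunion : {x | ∃ n, 0 < n ∧ 0 < birkhoffSum T g n x} = ⋃ N, E N := by
    ext x
    simp only [mem_setOf_eq, mem_iUnion]
    constructor
    · rintro ⟨n, hn, hpos⟩
      obtain ⟨m, rfl⟩ := Nat.exists_eq_add_of_lt hn
      exact ⟨0 + m, lt_of_lt_of_le hpos (garsiaA_spec2' (0 + m) x)⟩
    · rintro ⟨N, hN⟩
      exact garsiaA_spec1' N 0 x hN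
  have key : ∀ N, 0 ≤ ∫ x in E N, g x ∂μ := by
    intro N
    cases N with
    | zero => exact setIntegral_nonneg (hEmeas 0) fun x hx => le_of_lt hx
    | succ N =>
      set A1 := garsiaA T g (N+1) with hA1
      set P : X → ℝ := fun x => max (garsiaA T g N x) 0 with hP
      set P1 : X → ℝ := fun x => max (A1 x) 0 with hP1
      have iAN := integrable_garsiaA' hTm hg hgi N
      have iA1 := integrable_garsiaA' hTm hg hgi (N+1)
      have iP : Integrable P μ := iAN.pos_part
      have iP1 : Integrable P1 μ := iA1.pos_part
      have mP : Measurable P := (measurable_garsiaA' hTmeas hg N).max measurable_const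
      have iPT : Integrable (fun x => P (T x)) μ :=
        (hTm.integrable_comp iP.aestronglyMeasurable).mpr iP
      have hPTint : ∫ x, P (T x) ∂μ = ∫ x, P x ∂μ := by
        have h2 : AEStronglyMeasurable P (Measure.map T μ) := by
          rw [hTm.map_eq]; exact iP.aestronglyMeasurable
        rw [← integral_map hTmeas.aemeasurable h2, hTm.map_eq]
      have step1 : ∫ x in E (N+1), g x ∂μ
          = (∫ x in E (N+1), A1 x ∂μ) - ∫ x in E (N+1), P (T x) ∂μ := by
        rw [← integral_sub iA1.integrableOn iPT.integrableOn]
        apply setIntegral_congr_fun (hEmeas (N+1))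
        intro x _
        show g x = (g x + max (garsiaA T g N (T x)) 0) - P (T x)
        simp [hP]
      have step2 : ∫ x in E (N+1), A1 x ∂μ = ∫ x, P1 x ∂μ := by
        have e1 : ∫ x in E (N+1), A1 x ∂μ = ∫ x in E (N+1), P1 x ∂μ := by
          apply setIntegral_congr_fun (hEmeas (N+1))
          intro x hx
          exact (max_eq_left (le_of_lt hx)).symm
        have e2 : ∫ x in (E (N+1))ᶜ, P1 x ∂μ = 0 := by
          rw [setIntegral_congr_fun (hEmeas (N+1)).compl
            (g := fun _ => (0:ℝ)) ?_, integral_zero]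
          intro x hx
          exact max_eq_right (not_lt.mp hx)
        have := integral_add_compl (hEmeas (N+1)) iP1
        rw [e1]
        linarith
      have step3 : ∫ x in E (N+1), P (T x) ∂μ ≤ ∫ x, P x ∂μ := by
        rw [← hPTint]
        apply setIntegral_le_integral iPT
        filter_upwards with x using le_max_right _ _
      have step4 : ∫ x, P x ∂μ ≤ ∫ x, P1 x ∂μ := by
        apply integral_mono iP iP1
        intro x
        exact max_le_max (garsiaA_mono' x N) le_rfl
      rw [step1, step2]
      linarith
  have htend := tendsto_setIntegral_of_monotone hEmeas hmono
    (by rw [← hunion]; exact hgi.integrableOn)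
  rw [hunion]
  exact ge_of_tendsto' htend key

omit [MeasurableSpace X] in
lemma birkhoffSum_sub_const (n : ℕ) (x : X) (c : ℝ) :
    birkhoffSum T (fun y => g y - c) n x = birkhoffSum T g n x - n * c := by
  simp [birkhoffSum, Finset.sum_sub_distrib, mul_comm]

theorem no_linear_growth [IsProbabilityMeasure μ] (hT : Ergodic T μ) (hg : Measurable g)
    (hgi : Integrable g μ) (hg0 : ∫ x, g x ∂μ ≤ 0) {c : ℝ} (hc : 0 < c) :
    ∀ᵐ x ∂μ, ∃ C : ℝ, ∀ n : ℕ, birkhoffSum T g n x ≤ c * n + C := by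
  have hTm := hT.toMeasurePreserving
  have hTmeas := hTm.measurable
  set gc : X → ℝ := fun y => g y - c with hgc
  have hgcm : Measurable gc := hg.sub measurable_const
  have hgci : Integrable gc μ := hgi.sub (integrable_const c)
  set V : Set X := {x | ∀ k : ℕ, ∃ n, 0 < n ∧ (k:ℝ) < birkhoffSum T gc n x} with hV
  have hSmeas : ∀ n : ℕ, ∀ r : ℝ, MeasurableSet {x : X | 0 < n ∧ r < birkhoffSum T gc n x} := by
    intro n r
    by_cases hn : 0 < n
    · simpa [hn] using measurableSet_lt measurable_const (measurable_birkhoffSum' hTmeas hgcm n)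
    · simp [hn]
  have hVmeas : MeasurableSet V := by
    rw [hV]
    simp only [setOf_forall, setOf_exists]
    exact MeasurableSet.iInter fun k => MeasurableSet.iUnion fun n => by
      simpa [setOf_and] using hSmeas n k
  have hVinv : T ⁻¹' V = V := by
    ext x
    simp only [mem_preimage, hV, mem_setOf_eq]
    constructor
    · intro h k
      obtain ⟨k₁, hk₁⟩ := exists_nat_ge ((k:ℝ) - gc x)
      obtain ⟨n, hn, hlt⟩ := h k₁
      refine ⟨n + 1, Nat.succ_pos _, ?_⟩
      rw [birkhoffSum_succ']
      linarith
    · intro h k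
      obtain ⟨k₁, hk₁⟩ := exists_nat_ge (max ((k:ℝ) + gc x) (gc x))
      have hk₁a : (k:ℝ) + gc x ≤ k₁ := le_trans (le_max_left _ _) hk₁
      have hk₁b : gc x ≤ k₁ := le_trans (le_max_right _ _) hk₁
      obtain ⟨m, hm, hlt⟩ := h k₁
      have hm1 : m ≠ 1 := by
        intro h1
        rw [h1, birkhoffSum_one] at hlt
        linarith
      have hm2 : 2 ≤ m := by omega
      obtain ⟨n, rfl⟩ : ∃ n, m = n + 1 := ⟨m - 1, by omega⟩
      refine ⟨n, by omega, ?_⟩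
      rw [birkhoffSum_succ'] at hlt
      linarith
  rcases hT.toPreErgodic.ae_empty_or_univ hVmeas hVinv with hemp | huniv
  · -- V is a.e. empty: good case
    rw [ae_iff]
    have : {x | ¬∃ C : ℝ, ∀ n : ℕ, birkhoffSum T g n x ≤ c * n + C} ⊆ V := by
      intro x hx
      simp only [mem_setOf_eq, not_exists, not_forall, not_le] at hx
      intro k
      obtain ⟨n, hn⟩ := hx (k:ℝ)
      have hn0 : 0 < n := by
        rcases Nat.eq_zero_or_pos n with rfl | h
        · exfalso
          have hk : (0:ℝ) ≤ (k:ℝ) := Nat.cast_nonneg k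
          rw [birkhoffSum_zero] at hn
          push_cast at hn
          linarith
        · exact h
      refine ⟨n, hn0, ?_⟩
      rw [birkhoffSum_sub_const]
      linarith
    exact measure_mono_null this (ae_eq_empty.mp hemp)
  · -- V a.e. univ: contradiction with maximal ergodic theorem
    exfalso
    set E : Set X := {x | ∃ n, 0 < n ∧ 0 < birkhoffSum T gc n x} with hEdef
    have hEmeas : MeasurableSet E := by
      rw [hEdef]
      simp only [setOf_exists]
      exact MeasurableSet.iUnion fun n => by simpa [setOf_and] using hSmeas n 0
    have hVE : V ⊆ E := by
      intro x hx
      obtain ⟨n, hn, hlt⟩ := hx 0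
      exact ⟨n, hn, by simpa using hlt⟩
    have hEc : μ Eᶜ = 0 := by
      exact measure_mono_null (compl_subset_compl.mpr hVE) (ae_eq_univ.mp huniv)
    have hintE : ∫ x in E, gc x ∂μ = ∫ x, gc x ∂μ := by
      have := integral_add_compl hEmeas hgci
      have h0 : ∫ x in Eᶜ, gc x ∂μ = 0 := by
        rw [Measure.restrict_eq_zero.mpr hEc, integral_zero_measure]
      linarith
    have hmax := maximal_ergodic hTm hgcm hgci
    rw [← hEdef] at hmax
    rw [hintE] at hmax
    have : ∫ x, gc x ∂μ = (∫ x, g x ∂μ) - c := by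
      rw [hgc, integral_sub hgi (integrable_const c), integral_const]
      simp
    linarith

omit [MeasurableSpace X] in
lemma birkhoffSum_neg' (n : ℕ) (x : X) :
    birkhoffSum T (fun y => -g y) n x = -birkhoffSum T g n x := by
  simp [birkhoffSum]

theorem two_sided_bound [IsProbabilityMeasure μ] (hT : Ergodic T μ) (hg : Measurable g)
    (hgi : Integrable g μ) (hg0 : ∫ x, g x ∂μ = 0) :
    ∀ᵐ x ∂μ, ∀ c : ℝ, 0 < c → ∃ C : ℝ, ∀ n : ℕ, |birkhoffSum T g n x| ≤ c * n + C := by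
  have key : ∀ᵐ x ∂μ, ∀ q : ℚ, 0 < (q:ℝ) →
      (∃ C : ℝ, ∀ n : ℕ, birkhoffSum T g n x ≤ (q:ℝ) * n + C) ∧
      (∃ C : ℝ, ∀ n : ℕ, birkhoffSum T (fun y => -g y) n x ≤ (q:ℝ) * n + C) := by
    rw [ae_all_iff]
    intro q
    by_cases hq : 0 < (q:ℝ)
    · have h1 := no_linear_growth hT hg hgi (le_of_eq hg0) hq
      have h2 := no_linear_growth hT hg.neg (hgi.neg)
        (by rw [integral_neg, hg0, neg_zero] : ∫ x, -g x ∂μ ≤ 0) hq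
      filter_upwards [h1, h2] with x hx1 hx2 _
      exact ⟨hx1, hx2⟩
    · filter_upwards with x hx
      exact absurd hx hq
  filter_upwards [key] with x hx c hc
  obtain ⟨q, hq0, hqc⟩ := exists_rat_btwn hc
  obtain ⟨⟨C1, hC1⟩, ⟨C2, hC2⟩⟩ := hx q hq0
  refine ⟨max C1 C2, fun n => ?_⟩
  rw [abs_le]
  constructor
  · have := hC2 n
    rw [birkhoffSum_neg'] at this
    have hn : (q:ℝ) * n ≤ c * n := by
      apply mul_le_mul_of_nonneg_right (le_of_lt hqc) (Nat.cast_nonneg n)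
    have := le_max_right C1 C2
    linarith
  · have := hC1 n
    have hn : (q:ℝ) * n ≤ c * n :=
      mul_le_mul_of_nonneg_right (le_of_lt hqc) (Nat.cast_nonneg n)
    have := le_max_left C1 C2
    linarith

lemma floor_eq_abs_lt {u v ε : ℝ} (hε : 0 < ε) (h : ⌊u / ε⌋ = ⌊v / ε⌋) : |u - v| < ε := by
  have h1 : (⌊u / ε⌋ : ℝ) ≤ u / ε := Int.floor_le _
  have h2 : u / ε < ⌊u / ε⌋ + 1 := Int.lt_floor_add_one _
  have h3 : (⌊v / ε⌋ : ℝ) ≤ v / ε := Int.floor_le _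
  have h4 : v / ε < ⌊v / ε⌋ + 1 := Int.lt_floor_add_one _
  rw [h] at h1 h2
  have h5 : |u / ε - v / ε| < 1 := by rw [abs_lt]; constructor <;> linarith
  have h6 : u - v = ε * (u / ε - v / ε) := by field_simp
  rw [h6, abs_mul, abs_of_pos hε]
  calc ε * |u / ε - v / ε| < ε * 1 := by exact (mul_lt_mul_iff_right₀ hε).mpr h5
    _ = ε := mul_one ε

theorem separation [IsProbabilityMeasure μ] (hT : Ergodic T μ) (hg : Measurable g)
    (hgi : Integrable g μ) (hg0 : ∫ x, g x ∂μ = 0) {ε : ℝ} (hε : 0 < ε) :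
    μ {x | ∀ n : ℕ, 0 < n → ε ≤ |birkhoffSum T g n x|} = 0 := by
  classical
  have hTmeas := hT.toMeasurePreserving.measurable
  by_contra hμ
  set B : Set X := {x | ∀ n : ℕ, 0 < n → ε ≤ |birkhoffSum T g n x|} with hBdef
  have hB : MeasurableSet B := by
    rw [hBdef]
    simp only [setOf_forall]
    refine MeasurableSet.iInter fun n => MeasurableSet.iInter fun hn => ?_
    exact measurableSet_le measurable_const (measurable_birkhoffSum' hTmeas hg n).abs
  set β : ℝ := (μ B).toReal with hβdef
  have hβ : 0 < β := ENNReal.toReal_pos hμ (measure_ne_top μ B)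
  set g1 : X → ℝ := fun y => β - B.indicator (1 : X → ℝ) y with hg1def
  have hg1m : Measurable g1 := measurable_const.sub (measurable_one.indicator hB)
  have hindi : Integrable (B.indicator (1 : X → ℝ)) μ := (integrable_const 1).indicator hB
  have hg1i : Integrable g1 μ := (integrable_const β).sub hindi
  have hg1int : ∫ x, g1 x ∂μ = 0 := by
    rw [hg1def]
    simp only
    rw [integral_sub (integrable_const β) hindi, integral_indicator_one hB, integral_const]
    simp [hβdef, measureReal_def]
  have h1 := no_linear_growth hT hg1m hg1i (le_of_eq hg1int) (by positivity : (0:ℝ) < β/4)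
  have h2 := two_sided_bound hT hg hgi hg0
  haveI : (ae μ).NeBot := ae_neBot.mpr (IsProbabilityMeasure.ne_zero μ)
  obtain ⟨x, ⟨C1, hC1⟩, hx2⟩ := (h1.and h2).exists
  obtain ⟨C2, hC2⟩ := hx2 (β*ε/16) (by positivity)
  have hC2nonneg : 0 ≤ C2 := by
    have := hC2 0
    simp [birkhoffSum_zero] at this
    linarith
  -- visit counts
  set F : ℕ → Finset ℕ := fun n => (Finset.range n).filter (fun j => T^[j] x ∈ B) with hFdef
  have hsum : ∀ n : ℕ, birkhoffSum T g1 n x = β * n - (F n).card := by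
    intro n
    rw [hg1def]
    simp only [birkhoffSum, Finset.sum_sub_distrib, Finset.sum_const, Finset.card_range]
    congr 1
    · rw [nsmul_eq_mul, mul_comm]
    · rw [hFdef]
      simp only [Set.indicator_apply, Pi.one_apply]
      rw [Finset.sum_boole]
  have hv : ∀ n : ℕ, (3*β/4) * n - C1 ≤ ((F n).card : ℝ) := by
    intro n
    have := hC1 n
    rw [hsum n] at this
    linarith
  -- separation of values at visit times
  have hsep : ∀ n p q : ℕ, p ∈ F n → q ∈ F n → p < q →
      ε ≤ |birkhoffSum T g q x - birkhoffSum T g p x| := by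
    intro n p q hp hq hpq
    rw [hFdef] at hp hq
    simp only [Finset.mem_filter, Finset.mem_range] at hp hq
    have hadd : birkhoffSum T g q x - birkhoffSum T g p x
        = birkhoffSum T g (q - p) (T^[p] x) := by
      have h := birkhoffSum_add T g p (q - p) x
      rw [show p + (q - p) = q from by omega] at h
      linarith
    rw [hadd]
    exact hp.2 (q - p) (by omega)
  -- counting bound via injectivity of floor map
  have hcount : ∀ n : ℕ, ((F n).card : ℝ) ≤ (β/8) * n + (2*C2/ε + 2) := by
    intro n
    set L : ℝ := (β*ε/16) * n + C2 with hLdef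
    have hL0 : 0 ≤ L := by positivity
    set a : ℤ := ⌊-L/ε⌋ with hadef
    set b : ℤ := ⌊L/ε⌋ with hbdef
    have hmaps : ∀ j ∈ F n, ⌊birkhoffSum T g j x / ε⌋ ∈ Finset.Icc a b := by
      intro j hj
      rw [hFdef] at hj
      simp only [Finset.mem_filter, Finset.mem_range] at hj
      have habs : |birkhoffSum T g j x| ≤ L := by
        calc |birkhoffSum T g j x| ≤ (β*ε/16) * j + C2 := hC2 j
          _ ≤ L := by
            rw [hLdef]
            have hjn : (j:ℝ) ≤ n := Nat.cast_le.mpr (le_of_lt hj.1)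
            nlinarith [mul_le_mul_of_nonneg_left hjn (by positivity : (0:ℝ) ≤ β*ε/16)]
      rw [abs_le] at habs
      rw [Finset.mem_Icc]
      constructor
      · exact Int.floor_le_floor (by gcongr; exact habs.1)
      · exact Int.floor_le_floor (by gcongr; exact habs.2)
    have hinj : Set.InjOn (fun j => ⌊birkhoffSum T g j x / ε⌋) ↑(F n) := by
      intro p hp q hq hpq
      by_contra hne
      rcases Nat.lt_or_ge p q with h | h
      · have := hsep n p q (by exact_mod_cast hp) (by exact_mod_cast hq) h
        have h2 := floor_eq_abs_lt hε (hpq.symm : _)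
        linarith [abs_sub_comm (birkhoffSum T g p x) (birkhoffSum T g q x)]
      · have hqp : q < p := by omega
        have := hsep n q p (by exact_mod_cast hq) (by exact_mod_cast hp) hqp
        have h2 := floor_eq_abs_lt hε hpq
        linarith [abs_sub_comm (birkhoffSum T g p x) (birkhoffSum T g q x)]
    have hcard : (F n).card ≤ (Finset.Icc a b).card :=
      Finset.card_le_card_of_injOn _ hmaps hinj
    have hIcc : ((Finset.Icc a b).card : ℝ) ≤ 2*(L/ε) + 2 := by
      rw [Int.card_Icc]
      have hfa : (a:ℝ) ≥ -(L/ε) - 1 := by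
        have h1 := Int.sub_one_lt_floor (-L/ε)
        rw [hadef]
        have : -L/ε = -(L/ε) := by ring
        rw [this] at h1
        rw [this]
        linarith
      have hfb : (b:ℝ) ≤ L/ε := by rw [hbdef]; exact Int.floor_le _
      have h2L : (0:ℝ) ≤ 2*(L/ε) + 2 := by positivity
      rcases le_or_gt (b + 1 - a) 0 with h | h
      · rw [Int.toNat_of_nonpos h]
        simpa using h2L
      · have h1 : ((b + 1 - a).toNat : ℤ) = b + 1 - a := Int.toNat_of_nonneg h.le
        have h2 : ((b + 1 - a).toNat : ℝ) = (b:ℝ) + 1 - (a:ℝ) := by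
          exact_mod_cast congrArg (fun z : ℤ => (z : ℝ)) h1
        rw [h2]
        linarith
    have hfin : ((F n).card : ℝ) ≤ 2*(L/ε) + 2 := le_trans (Nat.cast_le.mpr hcard) hIcc
    calc ((F n).card : ℝ) ≤ 2*(L/ε) + 2 := hfin
      _ = 2*(((β*ε/16) * n + C2)/ε) + 2 := by rw [hLdef]
      _ = (β/8) * n + (2*C2/ε + 2) := by field_simp; ring
  -- contradiction
  obtain ⟨n, hn⟩ := exists_nat_gt ((C1 + (2*C2/ε + 2)) / (5*β/8))
  have h58 : (0:ℝ) < 5*β/8 := by positivity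
  rw [div_lt_iff₀ h58] at hn
  have hv' := hv n
  have hc' := hcount n
  nlinarith [hv' , hc']

end aux

theorem stmt10 {X : Type*} [MeasurableSpace X] (μ : MeasureTheory.Measure X)
    [MeasureTheory.IsProbabilityMeasure μ] (T : X → X) (hT : Ergodic T μ)
    (φ : X → ℝ) (hint : MeasureTheory.Integrable φ μ)
    (h0 : ∫ x, φ x ∂μ = 0) :
    ∀ᵐ x ∂μ, (0 : EReal) ≤ Filter.limsup
      (fun n : ℕ => ((∑ j ∈ Finset.range n, φ (T^[j] x) : ℝ) : EReal)) Filter.atTop := by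
  have hTm := hT.toMeasurePreserving
  have hTmeas := hTm.measurable
  set φ' : X → ℝ := hint.1.mk φ with hφ'def
  have hφ'm : Measurable φ' := hint.1.stronglyMeasurable_mk.measurable
  have haeφ : φ =ᵐ[μ] φ' := hint.1.ae_eq_mk
  have hint' : Integrable φ' μ := hint.congr haeφ
  have h0' : ∫ x, φ' x ∂μ = 0 := (integral_congr_ae haeφ).symm.trans h0
  set Bset : ℕ → Set X := fun k =>
    {x | ∀ n : ℕ, 0 < n → (1/2:ℝ)^k ≤ |birkhoffSum T φ' n x|} with hBdef
  have hBmeas : ∀ k, MeasurableSet (Bset k) := by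
    intro k
    rw [hBdef]
    simp only [setOf_forall]
    exact MeasurableSet.iInter fun n => MeasurableSet.iInter fun _ =>
      measurableSet_le measurable_const (measurable_birkhoffSum' hTmeas hφ'm n).abs
  have hBnull : ∀ k, μ (Bset k) = 0 :=
    fun k => separation hT hφ'm hint' h0' (by positivity : (0:ℝ) < (1/2)^k)
  have hNnull : μ (⋃ k : ℕ, ⋃ m : ℕ, T^[m] ⁻¹' (Bset k)) = 0 := by
    refine measure_iUnion_null fun k => measure_iUnion_null fun m => ?_
    rw [(hTm.iterate m).measure_preimage (hBmeas k).nullMeasurableSet]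
    exact hBnull k
  have horb : ∀ᵐ x ∂μ, ∀ m : ℕ, φ (T^[m] x) = φ' (T^[m] x) := by
    rw [ae_all_iff]
    intro m
    exact ae_eq_comp (hTmeas.iterate m).aemeasurable
      (by rw [(hTm.iterate m).map_eq]; exact haeφ)
  have hgood : ∀ᵐ x ∂μ, x ∉ ⋃ k : ℕ, ⋃ m : ℕ, T^[m] ⁻¹' (Bset k) :=
    measure_eq_zero_iff_ae_notMem.mp hNnull
  filter_upwards [horb, hgood] with x hx1 hx2
  -- replace φ by φ'
  have hSeq : ∀ n, (∑ j ∈ Finset.range n, φ (T^[j] x)) = birkhoffSum T φ' n x :=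
    fun n => Finset.sum_congr rfl fun j _ => hx1 j
  have hfun : (fun n : ℕ => ((∑ j ∈ Finset.range n, φ (T^[j] x) : ℝ) : EReal))
      = fun n : ℕ => ((birkhoffSum T φ' n x : ℝ) : EReal) :=
    funext fun n => congrArg _ (hSeq n)
  rw [hfun]
  -- recurrence data
  have H : ∀ m k : ℕ, ∃ n : ℕ, 0 < n ∧ |birkhoffSum T φ' n (T^[m] x)| < (1/2:ℝ)^k := by
    intro m k
    have : T^[m] x ∉ Bset k := by
      intro hmem
      exact hx2 (mem_iUnion.mpr ⟨k, mem_iUnion.mpr ⟨m, hmem⟩⟩)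
    rw [hBdef] at this
    simp only [mem_setOf_eq, not_forall, not_le] at this
    obtain ⟨n, hn, hlt⟩ := this
    exact ⟨n, hn, hlt⟩
  choose! nfun hn1 hn2 using H
  -- key frequently bound
  have freq : ∀ k : ℕ, ∃ᶠ n in atTop,
      ((-((1/2:ℝ)^k) : ℝ) : EReal) ≤ ((birkhoffSum T φ' n x : ℝ) : EReal) := by
    intro k
    rw [frequently_atTop]
    intro N
    -- build the chain
    set u : ℕ → ℕ := fun i => Nat.rec 0 (fun j uj => uj + nfun uj (k+j+1)) i with hu
    have hustep : ∀ i, u (i+1) = u i + nfun (u i) (k+i+1) := fun i => rfl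
    have hkey : ∀ i : ℕ, i ≤ u i ∧
        |birkhoffSum T φ' (u i) x| ≤ (1/2:ℝ)^k - (1/2:ℝ)^(k+i) := by
      intro i
      induction i with
      | zero =>
        constructor
        · exact Nat.zero_le _
        · show |birkhoffSum T φ' 0 x| ≤ (1/2:ℝ)^k - (1/2:ℝ)^(k+0)
          rw [birkhoffSum_zero]
          simp
      | succ i ih =>
        have hpos := hn1 (u i) (k+i+1)
        have habs := hn2 (u i) (k+i+1)
        constructor
        · rw [hustep i]; omega
        · have hadd : birkhoffSum T φ' (u (i+1)) x
              = birkhoffSum T φ' (u i) x + birkhoffSum T φ' (nfun (u i) (k+i+1)) (T^[u i] x) := by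
            rw [hustep i]; exact birkhoffSum_add T φ' (u i) _ x
          rw [hadd]
          have h1 := abs_add_le (birkhoffSum T φ' (u i) x)
            (birkhoffSum T φ' (nfun (u i) (k+i+1)) (T^[u i] x))
          have h2 : (1/2:ℝ)^(k+(i+1)) = (1/2:ℝ)^(k+i) * (1/2) := by rw [← pow_succ]; ring_nf
          have h3 : (1/2:ℝ)^(k+i+1) = (1/2:ℝ)^(k+i) * (1/2) := by rw [← pow_succ]
          have h4 := ih.2
          rw [h3] at habs
          rw [h2]
          calc |birkhoffSum T φ' (u i) x + _| ≤ _ := h1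
            _ ≤ ((1/2:ℝ)^k - (1/2:ℝ)^(k+i)) + (1/2:ℝ)^(k+i) * (1/2) := by
                apply add_le_add h4 (le_of_lt habs)
            _ = (1/2:ℝ)^k - (1/2:ℝ)^(k+i) * (1/2) := by ring
      
    refine ⟨u N, (hkey N).1, ?_⟩
    have := (hkey N).2
    have habs : -((1/2:ℝ)^k) ≤ birkhoffSum T φ' (u N) x := by
      have hp : (0:ℝ) ≤ (1/2:ℝ)^(k+N) := by positivity
      have := abs_le.mp (le_trans this (by linarith : (1/2:ℝ)^k - (1/2:ℝ)^(k+N) ≤ (1/2:ℝ)^k))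
      exact this.1
    exact_mod_cast EReal.coe_le_coe_iff.mpr habs
  -- conclude
  set L := Filter.limsup (fun n : ℕ => ((birkhoffSum T φ' n x : ℝ) : EReal)) atTop with hL
  have hLk : ∀ k : ℕ, ((-((1/2:ℝ)^k) : ℝ) : EReal) ≤ L :=
    fun k => le_limsup_of_frequently_le' (freq k)
  by_contra hcon
  push_neg at hcon
  have hL1 : ((-1 : ℝ) : EReal) ≤ L := by simpa using hLk 0
  have hLbot : L ≠ ⊥ := by
    intro h
    rw [h, le_bot_iff] at hL1
    exact EReal.coe_ne_bot _ hL1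
  have hLtop : L ≠ ⊤ := by
    intro h
    rw [h] at hcon
    exact not_top_lt hcon
  set l : ℝ := L.toReal with hldef
  have hLl : L = (l : EReal) := (EReal.coe_toReal hLtop hLbot).symm
  have hl0 : l < 0 := by
    rw [hLl] at hcon
    exact_mod_cast hcon
  obtain ⟨k, hk⟩ := exists_pow_lt_of_lt_one (by linarith : (0:ℝ) < -l) (by norm_num : (1/2:ℝ) < 1)
  have := hLk k
  rw [hLl] at this
  have : -((1/2:ℝ)^k) ≤ l := by exact_mod_cast this
  linarith
end

section
/- Let α > 0 and f the Manneville–Pomeau map of parameter α, with partition 𝒫 = {[0,x₁], (x₁,1]}. Then max over Q ∈ ⋁_{k=0}^{n−1} f^{−k}𝒫 of diam(Q) tends to 0 as n → ∞. In particular, f is topologically exact on (0,1]: for every x ∈ (0,1] and every neighborhood V of x in (0,1] there exists k ∈ ℕ with f^k(V) = (0,1]. -/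
open Real Set Filter Topology

namespace MPaux

variable {α x₁ : ℝ}

lemma gdiff (hα : 0 < α) {a b : ℝ} (ha : 0 ≤ a) (hab : a ≤ b) :
    (b - a) * (1 + a ^ α) ≤ b * (1 + b ^ α) - a * (1 + a ^ α) := by
  have hb : 0 ≤ b := le_trans ha hab
  have h1 : a ^ α ≤ b ^ α := Real.rpow_le_rpow ha hab hα.le
  have h2 : 0 ≤ a ^ α := Real.rpow_nonneg ha α
  nlinarith [mul_le_mul_of_nonneg_left h1 hb]

lemma g_le_one (hα : 0 < α) (hx₁ : x₁ ∈ Set.Ioo (0:ℝ) 1)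
    (hfix : x₁ * (1 + x₁ ^ α) = 1) {z : ℝ} (h0 : 0 ≤ z) (h1 : z ≤ x₁) :
    z * (1 + z ^ α) ≤ 1 := by
  have h3 := gdiff hα h0 h1
  have h2 : 0 ≤ z ^ α := Real.rpow_nonneg h0 α
  nlinarith

lemma one_lt_g (hα : 0 < α) (hx₁ : x₁ ∈ Set.Ioo (0:ℝ) 1)
    (hfix : x₁ * (1 + x₁ ^ α) = 1) {z : ℝ} (h1 : x₁ < z) :
    1 < z * (1 + z ^ α) := by
  have h3 := gdiff hα hx₁.1.le h1.le
  have h2 : 0 < x₁ ^ α := Real.rpow_pos_of_pos hx₁.1 α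
  nlinarith

lemma MP_left (hα : 0 < α) (hx₁ : x₁ ∈ Set.Ioo (0:ℝ) 1)
    (hfix : x₁ * (1 + x₁ ^ α) = 1) {z : ℝ} (h0 : 0 ≤ z) (h1 : z ≤ x₁) :
    MP α z = z * (1 + z ^ α) := by
  unfold MP
  rw [if_pos (g_le_one hα hx₁ hfix h0 h1)]

lemma MP_right (hα : 0 < α) (hx₁ : x₁ ∈ Set.Ioo (0:ℝ) 1)
    (hfix : x₁ * (1 + x₁ ^ α) = 1) {z : ℝ} (h1 : x₁ < z) :
    MP α z = z * (1 + z ^ α) - 1 := by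
  unfold MP
  rw [if_neg (not_le.2 (one_lt_g hα hx₁ hfix h1))]

lemma MP_mem_Icc (hα : 0 < α) (hx₁ : x₁ ∈ Set.Ioo (0:ℝ) 1)
    (hfix : x₁ * (1 + x₁ ^ α) = 1) {z : ℝ} (hz : z ∈ Icc (0:ℝ) 1) :
    MP α z ∈ Icc (0:ℝ) 1 := by
  by_cases h : z ≤ x₁
  · rw [MP_left hα hx₁ hfix hz.1 h]
    have h2 : 0 ≤ z ^ α := Real.rpow_nonneg hz.1 α
    exact ⟨by nlinarith [hz.1], g_le_one hα hx₁ hfix hz.1 h⟩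
  · push_neg at h
    rw [MP_right hα hx₁ hfix h]
    have h2 : z ^ α ≤ 1 := Real.rpow_le_one hz.1 hz.2 hα.le
    have h3 := one_lt_g hα hx₁ hfix h
    exact ⟨by linarith, by nlinarith [hz.1, hz.2]⟩

lemma MP_mem_Ioc (hα : 0 < α) (hx₁ : x₁ ∈ Set.Ioo (0:ℝ) 1)
    (hfix : x₁ * (1 + x₁ ^ α) = 1) {z : ℝ} (hz : z ∈ Ioc (0:ℝ) 1) :
    MP α z ∈ Ioc (0:ℝ) 1 := by
  by_cases h : z ≤ x₁
  · rw [MP_left hα hx₁ hfix hz.1.le h]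
    have h2 : 0 ≤ z ^ α := Real.rpow_nonneg hz.1.le α
    exact ⟨by nlinarith [hz.1], g_le_one hα hx₁ hfix hz.1.le h⟩
  · push_neg at h
    rw [MP_right hα hx₁ hfix h]
    have h2 : z ^ α ≤ 1 := Real.rpow_le_one hz.1.le hz.2 hα.le
    have h3 := one_lt_g hα hx₁ hfix h
    exact ⟨by linarith, by nlinarith [hz.1, hz.2]⟩

lemma iter_mem_Icc (hα : 0 < α) (hx₁ : x₁ ∈ Set.Ioo (0:ℝ) 1)
    (hfix : x₁ * (1 + x₁ ^ α) = 1) {z : ℝ} (hz : z ∈ Icc (0:ℝ) 1) (n : ℕ) :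
    (MP α)^[n] z ∈ Icc (0:ℝ) 1 := by
  induction n with
  | zero => simpa using hz
  | succ n ih =>
    rw [Function.iterate_succ_apply']
    exact MP_mem_Icc hα hx₁ hfix ih

lemma iter_mem_Ioc (hα : 0 < α) (hx₁ : x₁ ∈ Set.Ioo (0:ℝ) 1)
    (hfix : x₁ * (1 + x₁ ^ α) = 1) {z : ℝ} (hz : z ∈ Ioc (0:ℝ) 1) (n : ℕ) :
    (MP α)^[n] z ∈ Ioc (0:ℝ) 1 := by
  induction n with
  | zero => simpa using hz
  | succ n ih =>
    rw [Function.iterate_succ_apply']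
    exact MP_mem_Ioc hα hx₁ hfix ih


lemma expand1' (hα : 0 < α) (hx₁ : x₁ ∈ Set.Ioo (0:ℝ) 1)
    (hfix : x₁ * (1 + x₁ ^ α) = 1) {a b : ℝ} (ha : a ∈ Icc 0 x₁) (hb : b ∈ Icc 0 x₁)
    (hab : a ≤ b) : b - a ≤ MP α b - MP α a := by
  rw [MP_left hα hx₁ hfix ha.1 ha.2, MP_left hα hx₁ hfix (le_trans ha.1 hab) hb.2]
  have h1 := gdiff hα ha.1 hab
  have h2 : 0 ≤ a ^ α := Real.rpow_nonneg ha.1 α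
  nlinarith

lemma expand2' (hα : 0 < α) (hx₁ : x₁ ∈ Set.Ioo (0:ℝ) 1)
    (hfix : x₁ * (1 + x₁ ^ α) = 1) {a b : ℝ} (ha : a ∈ Ioc x₁ 1) (hb : b ∈ Ioc x₁ 1)
    (hab : a ≤ b) : (1 + x₁ ^ α) * (b - a) ≤ MP α b - MP α a := by
  rw [MP_right hα hx₁ hfix ha.1, MP_right hα hx₁ hfix (lt_of_lt_of_le ha.1 hab)]
  have h1 := gdiff hα (le_trans hx₁.1.le ha.1.le) hab
  have h2 : x₁ ^ α ≤ a ^ α := Real.rpow_le_rpow hx₁.1.le ha.1.le hα.le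
  nlinarith

lemma expand1 (hα : 0 < α) (hx₁ : x₁ ∈ Set.Ioo (0:ℝ) 1)
    (hfix : x₁ * (1 + x₁ ^ α) = 1) {a b : ℝ} (ha : a ∈ Icc 0 x₁) (hb : b ∈ Icc 0 x₁) :
    dist a b ≤ dist (MP α a) (MP α b) := by
  rcases le_total a b with h | h
  · have := expand1' hα hx₁ hfix ha hb h
    rw [Real.dist_eq, Real.dist_eq, abs_of_nonpos (by linarith), abs_of_nonpos (by linarith)]
    linarith
  · have := expand1' hα hx₁ hfix hb ha h
    rw [Real.dist_eq, Real.dist_eq, abs_of_nonneg (by linarith), abs_of_nonneg (by linarith)]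
    linarith

lemma expand2 (hα : 0 < α) (hx₁ : x₁ ∈ Set.Ioo (0:ℝ) 1)
    (hfix : x₁ * (1 + x₁ ^ α) = 1) {a b : ℝ} (ha : a ∈ Ioc x₁ 1) (hb : b ∈ Ioc x₁ 1) :
    (1 + x₁ ^ α) * dist a b ≤ dist (MP α a) (MP α b) := by
  have hlam : (0:ℝ) < 1 + x₁ ^ α := by
    have := Real.rpow_pos_of_pos hx₁.1 α; linarith
  rcases le_total a b with h | h
  · have := expand2' hα hx₁ hfix ha hb h
    rw [Real.dist_eq, Real.dist_eq, abs_of_nonpos (by linarith), abs_of_nonpos (by nlinarith)]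
    linarith
  · have := expand2' hα hx₁ hfix hb ha h
    rw [Real.dist_eq, Real.dist_eq, abs_of_nonneg (by linarith), abs_of_nonneg (by nlinarith)]
    linarith

lemma expand_iter (hα : 0 < α) (hx₁ : x₁ ∈ Set.Ioo (0:ℝ) 1)
    (hfix : x₁ * (1 + x₁ ^ α) = 1) (w : ℕ → Bool) {z z' : ℝ} (n : ℕ)
    (h : ∀ k < n, (MP α)^[k] z ∈ (if w k then Ioc x₁ 1 else Icc 0 x₁) ∧
      (MP α)^[k] z' ∈ (if w k then Ioc x₁ 1 else Icc 0 x₁)) :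
    (1 + x₁ ^ α) ^ (((Finset.range n).filter (fun k => w k = true)).card) * dist z z'
      ≤ dist ((MP α)^[n] z) ((MP α)^[n] z') := by
  have hlam : (0:ℝ) < 1 + x₁ ^ α := by
    have := Real.rpow_pos_of_pos hx₁.1 α; linarith
  induction n with
  | zero => simp
  | succ n ih =>
    have hprev := ih (fun k hk => h k (Nat.lt_succ_of_lt hk))
    have hn := h n (Nat.lt_succ_self n)
    rw [Function.iterate_succ_apply', Function.iterate_succ_apply']
    cases hw : w n with
    | false =>
      simp only [hw, if_neg] at hn
      have hstep := expand1 hα hx₁ hfix (by simpa using hn.1) (by simpa using hn.2)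
      have hcard : ((Finset.range (n+1)).filter (fun k => w k = true)).card
          = ((Finset.range n).filter (fun k => w k = true)).card := by
        rw [Finset.range_add_one, Finset.filter_insert, if_neg (by simp [hw])]
      rw [hcard]
      exact le_trans hprev hstep
    | true =>
      simp only [hw] at hn
      have hstep := expand2 hα hx₁ hfix (by simpa using hn.1) (by simpa using hn.2)
      have hcard : ((Finset.range (n+1)).filter (fun k => w k = true)).card
          = ((Finset.range n).filter (fun k => w k = true)).card + 1 := by
        rw [Finset.range_add_one, Finset.filter_insert, if_pos (by simp [hw]),
          Finset.card_insert_of_notMem (by simp)]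
      rw [hcard, pow_succ]
      calc (1 + x₁ ^ α) ^ ((Finset.range n).filter (fun k => w k = true)).card * (1 + x₁ ^ α) * dist z z'
          = (1 + x₁ ^ α) * ((1 + x₁ ^ α) ^ ((Finset.range n).filter (fun k => w k = true)).card * dist z z') := by ring
        _ ≤ (1 + x₁ ^ α) * dist ((MP α)^[n] z) ((MP α)^[n] z') :=
            mul_le_mul_of_nonneg_left hprev hlam.le
        _ ≤ _ := hstep


def TS (α x₁ : ℝ) (M : ℕ) : Set ℝ := {z | ∀ j ≤ M, (MP α)^[j] z ∈ Icc 0 x₁}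

lemma MP_zero : MP α 0 = 0 := by
  unfold MP
  rw [if_pos (by norm_num)]
  ring

lemma zero_mem_TS (hx₁ : x₁ ∈ Set.Ioo (0:ℝ) 1) (M : ℕ) : (0:ℝ) ∈ TS α x₁ M := by
  intro j _
  rw [Function.iterate_fixed MP_zero]
  exact ⟨le_refl _, hx₁.1.le⟩

lemma TS_subset (M : ℕ) : TS α x₁ M ⊆ Icc 0 x₁ := by
  intro z hz
  simpa using hz 0 (Nat.zero_le M)

noncomputable def ys (α x₁ : ℝ) (M : ℕ) : ℝ := sSup (TS α x₁ M)

lemma bddAbove_TS (M : ℕ) : BddAbove (TS α x₁ M) :=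
  ⟨x₁, fun z hz => (TS_subset M hz).2⟩

lemma mem_TS_le_ys {M : ℕ} {z : ℝ} (h : z ∈ TS α x₁ M) : z ≤ ys α x₁ M :=
  le_csSup (bddAbove_TS M) h

lemma ys_nonneg (hx₁ : x₁ ∈ Set.Ioo (0:ℝ) 1) (M : ℕ) : 0 ≤ ys α x₁ M :=
  mem_TS_le_ys (zero_mem_TS hx₁ M)

lemma ys_le (hx₁ : x₁ ∈ Set.Ioo (0:ℝ) 1) (M : ℕ) : ys α x₁ M ≤ x₁ :=
  csSup_le ⟨0, zero_mem_TS hx₁ M⟩ (fun z hz => (TS_subset M hz).2)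

lemma ys_small (hα : 0 < α) (hx₁ : x₁ ∈ Set.Ioo (0:ℝ) 1)
    (hfix : x₁ * (1 + x₁ ^ α) = 1) : ∀ ε > (0:ℝ), ∃ M : ℕ, ys α x₁ M ≤ ε := by
  by_contra hcon
  push_neg at hcon
  obtain ⟨ε, hε, hy⟩ := hcon
  set ℓ := sInf (Set.range (ys α x₁)) with hℓdef
  have hbdd : BddBelow (Set.range (ys α x₁)) :=
    ⟨0, by rintro r ⟨M, rfl⟩; exact ys_nonneg hx₁ M⟩
  have hne : (Set.range (ys α x₁)).Nonempty := ⟨ys α x₁ 0, ⟨0, rfl⟩⟩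
  have hℓε : ε ≤ ℓ := le_csInf hne (by rintro r ⟨M, rfl⟩; exact (hy M).le)
  have hℓpos : 0 < ℓ := lt_of_lt_of_le hε hℓε
  have hrp : 0 < (ℓ/2) * (ℓ/2) ^ α :=
    mul_pos (by linarith) (Real.rpow_pos_of_pos (by linarith) α)
  set δ := min (ℓ/2) ((ℓ/2) * (ℓ/2) ^ α / 2) with hδdef
  have hδpos : 0 < δ := lt_min (by linarith) (by linarith)
  have key : ∀ M, ℓ + δ ≤ ys α x₁ M := by
    intro M
    have h1 : ℓ ≤ ys α x₁ (M+1) := csInf_le hbdd ⟨M+1, rfl⟩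
    obtain ⟨z, hzT, hz⟩ := exists_lt_of_lt_csSup ⟨0, zero_mem_TS hx₁ (M+1)⟩
      (show ys α x₁ (M+1) - δ < sSup (TS α x₁ (M+1)) by
        rw [← ys]; linarith)
    have hz0 : z ∈ Icc 0 x₁ := TS_subset _ hzT
    have hMPz : MP α z ∈ TS α x₁ M := by
      intro j hj
      rw [← Function.iterate_succ_apply]
      exact hzT (j+1) (by omega)
    have hle : MP α z ≤ ys α x₁ M := mem_TS_le_ys hMPz
    have hval : MP α z = z * (1 + z ^ α) := MP_left hα hx₁ hfix hz0.1 hz0.2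
    have hzℓ : ℓ - δ ≤ z := by linarith
    have hz2 : ℓ/2 ≤ z := by
      have : δ ≤ ℓ/2 := min_le_left _ _
      linarith
    have hmon : (ℓ/2) * (ℓ/2) ^ α ≤ z * z ^ α :=
      mul_le_mul hz2 (Real.rpow_le_rpow (by linarith) hz2 hα.le)
        (Real.rpow_nonneg (by linarith) α) (by linarith)
    have hδ2 : δ ≤ (ℓ/2) * (ℓ/2) ^ α / 2 := min_le_right _ _
    nlinarith
  have : ℓ + δ ≤ ℓ := le_csInf hne (by rintro r ⟨M, rfl⟩; exact key M)
  linarith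

lemma run_small {z : ℝ} {k M : ℕ}
    (h : ∀ j ≤ M, (MP α)^[k+j] z ∈ Icc 0 x₁) :
    (MP α)^[k] z ∈ Icc 0 (ys α x₁ M) := by
  have hT : (MP α)^[k] z ∈ TS α x₁ M := by
    intro j hj
    rw [← Function.iterate_add_apply]
    rw [Nat.add_comm j k]
    exact h j hj
  exact ⟨(TS_subset M hT).1, mem_TS_le_ys hT⟩

lemma pigeon (L : ℕ) (w : ℕ → Bool) : ∀ (b s : ℕ),
    ((Finset.Ico s (s + L*(b+1))).filter (fun k => w k = true)).card ≤ b →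
    ∃ k, s ≤ k ∧ k + L ≤ s + L*(b+1) ∧ ∀ j, k ≤ j → j < k + L → w j = false := by
  intro b
  induction b with
  | zero =>
    intro s hs
    have hL : L * (0+1) = L := by ring
    refine ⟨s, le_refl _, by omega, ?_⟩
    intro j h1 h2
    by_contra hj
    have hj' : w j = true := by simpa using hj
    have hmem : j ∈ (Finset.Ico s (s + L*(0+1))).filter (fun k => w k = true) := by
      rw [Finset.mem_filter, Finset.mem_Ico]
      exact ⟨⟨h1, by omega⟩, hj'⟩
    have := Finset.card_pos.2 ⟨j, hmem⟩
    omega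
  | succ b ih =>
    intro s hs
    have heq : s + L * (b+1+1) = (s+L) + L*(b+1) := by ring
    by_cases hall : ∀ j ∈ Finset.Ico s (s+L), w j = false
    · refine ⟨s, le_refl _, ?_, fun j h1 h2 => hall j (Finset.mem_Ico.2 ⟨h1, h2⟩)⟩
      omega
    · push_neg at hall
      obtain ⟨j₀, hj₀mem, hj₀⟩ := hall
      have hj₀' : w j₀ = true := by simpa using hj₀
      have hsplit : Finset.Ico s (s + L*(b+1+1)) =
          Finset.Ico s (s+L) ∪ Finset.Ico (s+L) (s + L*(b+1+1)) := by
        rw [Finset.Ico_union_Ico_eq_Ico (by omega) (by omega : s + L ≤ s + L*(b+1+1))]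
      have hdisj : Disjoint (Finset.Ico s (s+L)) (Finset.Ico (s+L) (s + L*(b+1+1))) :=
        Finset.Ico_disjoint_Ico_consecutive s (s+L) _
      have hcardsum : ((Finset.Ico s (s+L)).filter (fun k => w k = true)).card +
          ((Finset.Ico (s+L) (s + L*(b+1+1))).filter (fun k => w k = true)).card =
          ((Finset.Ico s (s + L*(b+1+1))).filter (fun k => w k = true)).card := by
        rw [hsplit, Finset.filter_union,
          Finset.card_union_of_disjoint (Finset.disjoint_filter_filter hdisj)]
      have h1 : 1 ≤ ((Finset.Ico s (s+L)).filter (fun k => w k = true)).card :=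
        Finset.card_pos.2 ⟨j₀, Finset.mem_filter.2 ⟨hj₀mem, hj₀'⟩⟩
      have hrest : ((Finset.Ico (s+L) ((s+L) + L*(b+1))).filter (fun k => w k = true)).card ≤ b := by
        rw [← heq]
        omega
      obtain ⟨k, hk1, hk2, hk3⟩ := ih (s+L) hrest
      exact ⟨k, by omega, by omega, hk3⟩


lemma diam_small (hα : 0 < α) (hx₁ : x₁ ∈ Set.Ioo (0:ℝ) 1)
    (hfix : x₁ * (1 + x₁ ^ α) = 1) : ∀ ε > (0:ℝ), ∃ N : ℕ, ∀ n ≥ N, ∀ w : ℕ → Bool,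
    Metric.diam {z | z ∈ Set.Icc (0:ℝ) 1 ∧ ∀ k < n,
      (MP α)^[k] z ∈ (if w k then Set.Ioc x₁ 1 else Set.Icc 0 x₁)} ≤ ε := by
  intro ε hε
  have hlam : 1 < 1 + x₁ ^ α := by
    have := Real.rpow_pos_of_pos hx₁.1 α; linarith
  obtain ⟨B, hB⟩ : ∃ B : ℕ, 1/ε < (1 + x₁ ^ α) ^ B := pow_unbounded_of_one_lt _ hlam
  have hB' : 1 < (1 + x₁ ^ α) ^ B * ε := by
    rw [div_lt_iff₀ hε] at hB
    linarith
  obtain ⟨M, hM⟩ := ys_small hα hx₁ hfix ε hε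
  refine ⟨(M+1)*(B+1), fun n hn w => ?_⟩
  apply Metric.diam_le_of_forall_dist_le hε.le
  rintro z ⟨hz1, hz2⟩ z' ⟨hz1', hz2'⟩
  by_cases hc : B ≤ ((Finset.range n).filter (fun k => w k = true)).card
  · have hexp := expand_iter hα hx₁ hfix w n (fun k hk => ⟨hz2 k hk, hz2' k hk⟩)
    have h1 : dist ((MP α)^[n] z) ((MP α)^[n] z') ≤ 1 := by
      have ha := iter_mem_Icc hα hx₁ hfix hz1 n
      have hb := iter_mem_Icc hα hx₁ hfix hz1' n
      rw [Real.dist_eq, abs_le]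
      constructor <;> [linarith [ha.1, ha.2, hb.1, hb.2]; linarith [ha.1, ha.2, hb.1, hb.2]]
    have h2 : (1 + x₁ ^ α) ^ B ≤ (1 + x₁ ^ α) ^ (((Finset.range n).filter (fun k => w k = true)).card) :=
      pow_le_pow_right₀ hlam.le hc
    have hd : 0 ≤ dist z z' := dist_nonneg
    have hpB : (0:ℝ) < (1 + x₁ ^ α) ^ B := pow_pos (by linarith) B
    nlinarith [mul_le_mul_of_nonneg_right h2 hd]
  · push_neg at hc
    have hN : (M+1)*(B+1) ≤ n := hn
    have hsub : Finset.Ico 0 (0 + (M+1)*(B+1)) ⊆ Finset.range n := by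
      rw [Finset.range_eq_Ico]
      exact Finset.Ico_subset_Ico (le_refl 0) (by omega)
    have hcard : ((Finset.Ico 0 (0 + (M+1)*(B+1))).filter (fun k => w k = true)).card ≤ B :=
      le_trans (Finset.card_le_card (Finset.filter_subset_filter _ hsub)) (by omega)
    obtain ⟨k, _, hkL, hkw⟩ := pigeon (M+1) w B 0 hcard
    have hkn : k + (M+1) ≤ n := by omega
    have hrun : ∀ j ≤ M, (MP α)^[k+j] z ∈ Icc 0 x₁ := by
      intro j hj
      have hw : w (k+j) = false := hkw (k+j) (by omega) (by omega)
      simpa [hw] using hz2 (k+j) (by omega)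
    have hrun' : ∀ j ≤ M, (MP α)^[k+j] z' ∈ Icc 0 x₁ := by
      intro j hj
      have hw : w (k+j) = false := hkw (k+j) (by omega) (by omega)
      simpa [hw] using hz2' (k+j) (by omega)
    have h1 := run_small hrun
    have h1' := run_small hrun'
    have hd1 : dist ((MP α)^[k] z) ((MP α)^[k] z') ≤ ε := by
      rw [Real.dist_eq, abs_le]
      constructor <;> [linarith [h1.1, h1.2, h1'.1, h1'.2]; linarith [h1.1, h1.2, h1'.1, h1'.2]]
    have hexp := expand_iter hα hx₁ hfix w k (fun j hj => ⟨hz2 j (by omega), hz2' j (by omega)⟩)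
    have hpow : (1:ℝ) ≤ (1 + x₁ ^ α) ^ (((Finset.range k).filter (fun j => w j = true)).card) :=
      one_le_pow₀ hlam.le
    nlinarith [dist_nonneg (x := z) (y := z')]


lemma g_cont (hα : 0 < α) : Continuous (fun x : ℝ => x * (1 + x ^ α)) := by
  have h : Continuous (fun x : ℝ => x ^ α) :=
    continuous_iff_continuousAt.2 fun x => Real.continuousAt_rpow_const x α (Or.inr hα.le)
  exact continuous_id.mul (continuous_const.add h)

lemma image_Ioc_left (hα : 0 < α) (hx₁ : x₁ ∈ Set.Ioo (0:ℝ) 1)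
    (hfix : x₁ * (1 + x₁ ^ α) = 1) {u v : ℝ} (hu : 0 ≤ u) (huv : u < v) (hv : v ≤ x₁) :
    MP α '' (Ioc u v) = Ioc (u * (1 + u ^ α)) (v * (1 + v ^ α)) := by
  apply Subset.antisymm
  · rintro y ⟨t, ht, rfl⟩
    obtain ⟨htu, htv⟩ := ht
    have ht0 : 0 ≤ t := le_trans hu htu.le
    rw [MP_left hα hx₁ hfix ht0 (htv.trans hv)]
    have h1 := gdiff hα hu htu.le
    have h2 := gdiff hα ht0 htv
    have h3 : 0 < 1 + u ^ α := by have := Real.rpow_nonneg hu α; linarith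
    have h4 : (0:ℝ) ≤ 1 + t ^ α := by have := Real.rpow_nonneg ht0 α; linarith
    constructor
    · nlinarith
    · nlinarith [mul_nonneg (by linarith : (0:ℝ) ≤ v - t) h4]
  · intro y hy
    have hsub := intermediate_value_Ioc huv.le ((g_cont hα).continuousOn
      (s := Icc u v))
    obtain ⟨t, ht, rfl⟩ := hsub hy
    exact ⟨t, ht, MP_left hα hx₁ hfix (le_trans hu ht.1.le) (ht.2.trans hv)⟩

lemma image_Ioc_right (hα : 0 < α) (hx₁ : x₁ ∈ Set.Ioo (0:ℝ) 1)
    (hfix : x₁ * (1 + x₁ ^ α) = 1) {u v : ℝ} (hu : x₁ ≤ u) (huv : u < v) (hv : v ≤ 1) :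
    MP α '' (Ioc u v) = Ioc (u * (1 + u ^ α) - 1) (v * (1 + v ^ α) - 1) := by
  have hu0 : 0 ≤ u := le_trans hx₁.1.le hu
  apply Subset.antisymm
  · rintro y ⟨t, ht, rfl⟩
    obtain ⟨htu, htv⟩ := ht
    have ht1 : x₁ < t := lt_of_le_of_lt hu htu
    have ht0 : 0 ≤ t := le_trans hu0 htu.le
    rw [MP_right hα hx₁ hfix ht1]
    have h1 := gdiff hα hu0 htu.le
    have h2 := gdiff hα ht0 htv
    have h3 : 0 < 1 + u ^ α := by have := Real.rpow_nonneg hu0 α; linarith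
    have h4 : (0:ℝ) ≤ 1 + t ^ α := by have := Real.rpow_nonneg ht0 α; linarith
    constructor
    · nlinarith
    · nlinarith [mul_nonneg (by linarith : (0:ℝ) ≤ v - t) h4]
  · intro y hy
    have hcont : ContinuousOn (fun x : ℝ => x * (1 + x ^ α) - 1) (Icc u v) :=
      ((g_cont hα).sub continuous_const).continuousOn
    have hsub := intermediate_value_Ioc huv.le hcont
    obtain ⟨t, ht, rfl⟩ := hsub hy
    exact ⟨t, ht, MP_right hα hx₁ hfix (lt_of_le_of_lt hu ht.1)⟩

lemma final_step (hα : 0 < α) (hx₁ : x₁ ∈ Set.Ioo (0:ℝ) 1)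
    (hfix : x₁ * (1 + x₁ ^ α) = 1) {c : ℝ} (hc : x₁ < c) :
    Ioc (0:ℝ) 1 ⊆ MP α '' (Ioc 0 c) := by
  have h1 : MP α '' (Ioc 0 x₁) ⊆ MP α '' (Ioc 0 c) :=
    image_mono (Ioc_subset_Ioc_right hc.le)
  rw [image_Ioc_left hα hx₁ hfix (le_refl 0) hx₁.1 (le_refl x₁), zero_mul, hfix] at h1
  exact h1

lemma grow0 (hα : 0 < α) (hx₁ : x₁ ∈ Set.Ioo (0:ℝ) 1)
    (hfix : x₁ * (1 + x₁ ^ α) = 1) : ∀ (m : ℕ) (c : ℝ), 0 < c → c ≤ 1 →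
    x₁ < c + m * (c * c ^ α) → ∃ j, Ioc (0:ℝ) 1 ⊆ (MP α)^[j] '' (Ioc 0 c) := by
  intro m
  induction m with
  | zero =>
    intro c hc0 hc1 hx
    refine ⟨1, ?_⟩
    rw [Function.iterate_one]
    exact final_step hα hx₁ hfix (by push_cast at hx; linarith)
  | succ m ih =>
    intro c hc0 hc1 hx
    by_cases hcx : x₁ < c
    · exact ⟨1, by rw [Function.iterate_one]; exact final_step hα hx₁ hfix hcx⟩
    · push_neg at hcx
      have hca : 0 ≤ c ^ α := Real.rpow_nonneg hc0.le α
      have h1 : MP α '' (Ioc 0 c) = Ioc 0 (c * (1 + c ^ α)) := by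
        rw [image_Ioc_left hα hx₁ hfix (le_refl 0) hc0 hcx, zero_mul]
      set c' := c * (1 + c ^ α) with hc'def
      have hc'0 : 0 < c' := by nlinarith
      have hc'1 : c' ≤ 1 := g_le_one hα hx₁ hfix hc0.le hcx
      have hc'c : c ≤ c' := by nlinarith
      have hmono : c * c ^ α ≤ c' * c' ^ α :=
        mul_le_mul hc'c (Real.rpow_le_rpow hc0.le hc'c hα.le) hca hc'0.le
      have hx' : x₁ < c' + m * (c' * c' ^ α) := by
        have hm : (0:ℝ) ≤ (m:ℝ) := Nat.cast_nonneg m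
        push_cast at hx ⊢
        nlinarith
      obtain ⟨j, hj⟩ := ih c' hc'0 hc'1 hx'
      refine ⟨j + 1, ?_⟩
      rw [Function.iterate_add, Set.image_comp, Function.iterate_one, h1]
      exact hj


lemma exact_aux (hα : 0 < α) (hx₁ : x₁ ∈ Set.Ioo (0:ℝ) 1)
    (hfix : x₁ * (1 + x₁ ^ α) = 1) :
    ∀ u v : ℝ, 0 ≤ u → u < v → v ≤ 1 → ∃ k, Ioc (0:ℝ) 1 ⊆ (MP α)^[k] '' (Ioc u v) := by
  intro u v hu huv hv
  by_cases hstr : ∃ (k : ℕ) (a b : ℝ), a < x₁ ∧ x₁ < b ∧ b ≤ 1 ∧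
      (MP α)^[k] '' (Ioc u v) = Ioc a b
  · obtain ⟨k, a, b, hax, hxb, hb1, him⟩ := hstr
    have hb0 : 0 ≤ b := le_trans hx₁.1.le hxb.le
    have h2 : MP α '' (Ioc x₁ b) = Ioc 0 (b * (1 + b ^ α) - 1) := by
      rw [image_Ioc_right hα hx₁ hfix (le_refl x₁) hxb hb1, hfix, sub_self]
    set cb := b * (1 + b ^ α) - 1 with hcbdef
    have hcb0 : 0 < cb := by have := one_lt_g hα hx₁ hfix hxb; rw [hcbdef]; linarith
    have hcb1 : cb ≤ 1 := by
      have hb2 : b ^ α ≤ 1 := Real.rpow_le_one hb0 hb1 hα.le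
      rw [hcbdef]; nlinarith
    obtain ⟨m, hm⟩ : ∃ m : ℕ, x₁ < cb + m * (cb * cb ^ α) := by
      have hpos : 0 < cb * cb ^ α := mul_pos hcb0 (Real.rpow_pos_of_pos hcb0 α)
      obtain ⟨m, hm⟩ := exists_nat_gt (x₁ / (cb * cb ^ α))
      refine ⟨m, ?_⟩
      rw [div_lt_iff₀ hpos] at hm
      nlinarith
    obtain ⟨j, hj⟩ := grow0 hα hx₁ hfix m cb hcb0 hcb1 hm
    refine ⟨j + (1 + k), ?_⟩
    rw [Function.iterate_add, Set.image_comp]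
    refine hj.trans (image_mono ?_)
    rw [Function.iterate_add, Set.image_comp, Function.iterate_one, him, ← h2]
    exact image_mono (Ioc_subset_Ioc_left hax.le)
  · exfalso
    have hP : ∀ k, ∃ a b : ℝ, 0 ≤ a ∧ a < b ∧ b ≤ 1 ∧ v - u ≤ b - a ∧
        (MP α)^[k] '' (Ioc u v) = Ioc a b ∧
        (∀ j < k, ∃ s : Bool, ∀ y ∈ Ioc u v,
          (MP α)^[j] y ∈ (if s then Ioc x₁ 1 else Icc 0 x₁)) := by
      intro k
      induction k with
      | zero => exact ⟨u, v, hu, huv, hv, le_refl _, by simp, by omega⟩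
      | succ k ih =>
        obtain ⟨a, b, ha0, hab, hb1, hlen, him, hsym⟩ := ih
        have hnotstr : ¬(a < x₁ ∧ x₁ < b) := fun ⟨h1', h2'⟩ =>
          hstr ⟨k, a, b, h1', h2', hb1, him⟩
        have hmemk : ∀ y ∈ Ioc u v, (MP α)^[k] y ∈ Ioc a b := by
          intro y hy
          rw [← him]
          exact mem_image_of_mem _ hy
        by_cases hbx : b ≤ x₁
        · have haa : 0 ≤ a ^ α := Real.rpow_nonneg ha0 α
          have hgd := gdiff hα ha0 hab.le
          refine ⟨a * (1 + a ^ α), b * (1 + b ^ α), by nlinarith, by nlinarith,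
            g_le_one hα hx₁ hfix (le_trans ha0 hab.le) hbx, by nlinarith, ?_, ?_⟩
          · rw [Function.iterate_succ', Set.image_comp, him,
              image_Ioc_left hα hx₁ hfix ha0 hab hbx]
          · intro j hj
            rcases Nat.lt_or_ge j k with h | h
            · exact hsym j h
            · have hjk : j = k := by omega
              subst hjk
              refine ⟨false, fun y hy => ?_⟩
              have hm := hmemk y hy
              have hif : (if (false : Bool) then Ioc x₁ 1 else Icc 0 x₁) = Icc 0 x₁ := by simp
              rw [hif]
              exact ⟨le_trans ha0 hm.1.le, hm.2.trans hbx⟩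
        · push_neg at hbx
          have hxa : x₁ ≤ a := by
            by_contra h
            exact hnotstr ⟨not_le.1 h, hbx⟩
          have ha0' : 0 ≤ a := le_trans hx₁.1.le hxa
          have hb0 : 0 ≤ b := le_trans ha0' hab.le
          have haa : 0 ≤ a ^ α := Real.rpow_nonneg ha0' α
          have hgd := gdiff hα ha0' hab.le
          have hga : 1 ≤ a * (1 + a ^ α) := by
            rcases eq_or_lt_of_le hxa with h | h
            · rw [← h, hfix]
            · exact (one_lt_g hα hx₁ hfix h).le
          have hgb2 : b * (1 + b ^ α) ≤ 2 := by
            have hb2 : b ^ α ≤ 1 := Real.rpow_le_one hb0 hb1 hα.le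
            nlinarith
          refine ⟨a * (1 + a ^ α) - 1, b * (1 + b ^ α) - 1, by linarith, by nlinarith,
            by linarith, by nlinarith, ?_, ?_⟩
          · rw [Function.iterate_succ', Set.image_comp, him,
              image_Ioc_right hα hx₁ hfix hxa hab hb1]
          · intro j hj
            rcases Nat.lt_or_ge j k with h | h
            · exact hsym j h
            · have hjk : j = k := by omega
              subst hjk
              refine ⟨true, fun y hy => ?_⟩
              have hm := hmemk y hy
              have hif : (if (true : Bool) then Ioc x₁ 1 else Icc 0 x₁) = Ioc x₁ 1 := by simp
              rw [hif]
              exact ⟨lt_of_le_of_lt hxa hm.1, hm.2.trans hb1⟩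
    obtain ⟨N, hN⟩ := diam_small hα hx₁ hfix ((v - u)/2) (by linarith)
    obtain ⟨a, b, _, _, _, _, _, hsym⟩ := hP N
    classical
    set w : ℕ → Bool := fun j => if h : j < N then Classical.choose (hsym j h) else false
      with hwdef
    set C := {z | z ∈ Set.Icc (0:ℝ) 1 ∧ ∀ k < N,
      (MP α)^[k] z ∈ (if w k then Set.Ioc x₁ 1 else Set.Icc 0 x₁)} with hCdef
    have hsubC : Ioc u v ⊆ C := by
      intro y hy
      refine ⟨⟨le_trans hu hy.1.le, hy.2.trans hv⟩, ?_⟩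
      intro k hk
      have hwk : w k = Classical.choose (hsym k hk) := dif_pos hk
      rw [hwk]
      exact Classical.choose_spec (hsym k hk) y hy
    have hbC : Bornology.IsBounded C :=
      (Metric.isBounded_Icc (0:ℝ) 1).subset (fun y hy => hy.1)
    have hd1 : Metric.diam (Ioc u v) ≤ Metric.diam C := Metric.diam_mono hsubC hbC
    rw [Real.diam_Ioc huv.le] at hd1
    have := hN N (le_refl N) w
    rw [← hCdef] at this
    linarith

end MPaux

theorem stmt11 (α : ℝ) (hα : 0 < α) (x₁ : ℝ) (hx₁ : x₁ ∈ Set.Ioo (0:ℝ) 1)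
    (hfix : x₁ * (1 + x₁ ^ α) = 1) :
    (∀ ε > (0:ℝ), ∃ N : ℕ, ∀ n ≥ N, ∀ w : ℕ → Bool,
      Metric.diam {z | z ∈ Set.Icc (0:ℝ) 1 ∧ ∀ k < n,
        (MP α)^[k] z ∈ (if w k then Set.Ioc x₁ 1 else Set.Icc 0 x₁)} ≤ ε) ∧
    (∀ z ∈ Set.Ioc (0:ℝ) 1, ∀ ε > (0:ℝ), ∃ k : ℕ,
      (MP α)^[k] '' (Set.Ioc 0 1 ∩ Metric.ball z ε) = Set.Ioc 0 1) := by
  constructor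
  · exact MPaux.diam_small hα hx₁ hfix
  · intro z hz ε hε
    set a := max (z/2) (z - ε/2) with hadef
    have ha0 : 0 < a := lt_of_lt_of_le (by linarith [hz.1] : (0:ℝ) < z/2) (le_max_left _ _)
    have haz : a < z := max_lt (by linarith [hz.1]) (by linarith)
    have haε : z - ε/2 ≤ a := le_max_right _ _
    obtain ⟨k, hk⟩ := MPaux.exact_aux hα hx₁ hfix a z ha0.le haz hz.2
    refine ⟨k, Set.Subset.antisymm ?_ ?_⟩
    · rintro _ ⟨t, ⟨ht1, _⟩, rfl⟩
      exact MPaux.iter_mem_Ioc hα hx₁ hfix ht1 k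
    · intro y hy
      obtain ⟨t, ht, rfl⟩ := hk hy
      refine ⟨t, ⟨⟨lt_trans ha0 ht.1, ht.2.trans hz.2⟩, ?_⟩, rfl⟩
      rw [Metric.mem_ball, Real.dist_eq, abs_lt]
      constructor <;> [linarith [ht.1, ht.2]; linarith [ht.1, ht.2]]
end

section
/- Let α > 0, γ > α, and let ω_γ(x) = −x^γ on [0,1]. Then for every β > 0, the series Σ_{n≥1} exp(β S_n ω_γ(y_n)) diverges to +∞, where y_n ∈ (x₁,1] is the unique point with f(y_n) = x_{n−1} and S_n is the Birkhoff sum for the Manneville–Pomeau map f of parameter α. Consequently (via the Bowen-type formula), ω_γ has no phase transition in temperature when γ > α. -/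
open Real Set Filter Topology

private lemma bern (α : ℝ) (hα : 0 < α) (t : ℝ) (ht : 0 < t) (ht1 : t ≤ 1) :
    (1 + t) ^ (-α) ≤ 1 - ((min α 1) / 2) * t := by
  set m := min α 1 with hm
  have hm0 : 0 < m := lt_min hα one_pos
  have hm1 : m ≤ 1 := min_le_right _ _
  have h1 : (1 + t) ^ (-α) ≤ (1 + t) ^ (-m) :=
    Real.rpow_le_rpow_of_exponent_le (by linarith) (neg_le_neg (min_le_left _ _))
  have h1t : (0:ℝ) < 1 + t := by linarith
  have h2 : (1 + t) ^ (-m) = ((1 + t)⁻¹) ^ m := by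
    rw [Real.rpow_neg h1t.le, ← Real.inv_rpow h1t.le]
  have h3 : (1 + t)⁻¹ ≤ 1 - t / 2 := by
    rw [inv_le_iff_one_le_mul₀ h1t]
    nlinarith
  have h4 : ((1 + t)⁻¹) ^ m ≤ (1 - t / 2) ^ m :=
    Real.rpow_le_rpow (by positivity) h3 hm0.le
  have h5 : (1 - t / 2) ^ m ≤ 1 + m * (-(t/2)) := by
    have := rpow_one_add_le_one_add_mul_self (s := -(t/2)) (by linarith) hm0.le hm1
    rw [← sub_eq_add_neg] at this
    linarith
  calc (1 + t) ^ (-α) ≤ (1 + t) ^ (-m) := h1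
    _ = ((1 + t)⁻¹) ^ m := h2
    _ ≤ (1 - t / 2) ^ m := h4
    _ ≤ 1 + m * (-(t/2)) := h5
    _ = 1 - (m / 2) * t := by ring

/-- For `γ > α` and every `β > 0`, the series
`Σ_{n ≥ 1} exp(β S_n ω_γ(y_n))` (with `ω_γ(x) = -x^γ`) diverges to `+∞`. -/
theorem stmt13 (α γ : ℝ) (hα : 0 < α) (hγ : α < γ)
    (x₁ : ℝ) (hx₁ : x₁ ∈ Set.Ioo (0:ℝ) 1) (hfix : x₁ * (1 + x₁ ^ α) = 1)
    (x : ℕ → ℝ) (hx0 : x 0 = 1)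
    (hx : ∀ n, x (n+1) ∈ Set.Ioo (0:ℝ) (x n) ∧ MP α (x (n+1)) = x n)
    (y : ℕ → ℝ)
    (hy : ∀ n : ℕ, 1 ≤ n → y n ∈ Set.Ioc x₁ 1 ∧ MP α (y n) = x (n-1)) :
    ∀ β > (0:ℝ),
      Filter.Tendsto (fun N : ℕ => ∑ n ∈ Finset.Icc 1 N,
          Real.exp (β * ∑ j ∈ Finset.range n, (-(((MP α)^[j] (y n)) ^ γ))))
        Filter.atTop Filter.atTop := by
  intro β hβ
  have hγ0 : 0 < γ := hα.trans hγ
  -- positivity and monotonicity of x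
  have hxpos : ∀ n, 0 < x n := by
    intro n; cases n with
    | zero => rw [hx0]; exact one_pos
    | succ k => exact (hx k).1.1
  have hxlt : ∀ n, x (n+1) < x n := fun n => (hx n).1.2
  have hxle1 : ∀ n, x n ≤ 1 := by
    intro n; induction n with
    | zero => rw [hx0]
    | succ k ih => exact ((hxlt k).le.trans ih)
  have hxlt1 : ∀ n, x (n+1) < 1 := fun n => (hxlt n).trans_le (hxle1 n)
  -- the recursion is always via the left branch
  have hstep : ∀ n, x (n+1) * (1 + x (n+1) ^ α) = x n := by
    intro n
    have h := (hx n).2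
    unfold MP at h
    split_ifs at h with hc
    · exact h
    · exfalso
      have h1 : x (n+1) ^ α < 1 := Real.rpow_lt_one (hxpos (n+1)).le (hxlt1 n) hα
      nlinarith [hxpos (n+1), hxlt n, hxle1 n, hxlt1 n]
  set c : ℝ := (min α 1) / 2 with hc_def
  have hc0 : 0 < c := by
    have := lt_min hα one_pos; positivity
  have hc1 : c ≤ 1 := by
    have : min α 1 ≤ 1 := min_le_right _ _; linarith
  -- key lower bound on x n ^ (-α)
  have key : ∀ n, 1 ≤ n → c * n ≤ (x n) ^ (-α) := by
    intro n hn
    induction n with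
    | zero => omega
    | succ k ih =>
      rcases Nat.eq_or_lt_of_le hn with h1 | h1
      · -- n = 1
        have hk : k = 0 := by omega
        subst hk
        have : (1:ℝ) ≤ (x 1) ^ (-α) :=
          Real.one_le_rpow_of_pos_of_le_one_of_nonpos (hxpos 1) (hxle1 1) (by linarith)
        push_cast; linarith
      · have hk1 : 1 ≤ k := by omega
        have ih' := ih hk1
        -- show x k ^ (-α) + c ≤ x (k+1) ^ (-α)
        have hp := hxpos (k+1)
        have ht : 0 < x (k+1) ^ α := Real.rpow_pos_of_pos hp α
        have ht1 : x (k+1) ^ α ≤ 1 :=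
          (Real.rpow_lt_one hp.le (hxlt1 k) hα).le
        have hrec : (x k) ^ (-α) = (x (k+1)) ^ (-α) * (1 + x (k+1) ^ α) ^ (-α) := by
          rw [← hstep k, Real.mul_rpow hp.le (by linarith)]
        have hb := bern α hα _ ht ht1
        have hinv : (x (k+1)) ^ (-α) * (x (k+1)) ^ α = 1 := by
          rw [← Real.rpow_add hp]; simp
        have hpos2 : 0 < (x (k+1)) ^ (-α) := Real.rpow_pos_of_pos hp (-α)
        have hle : (x k) ^ (-α) + c ≤ (x (k+1)) ^ (-α) := by
          have h2 : (x k) ^ (-α) ≤ (x (k+1)) ^ (-α) * (1 - c * x (k+1) ^ α) := by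
            rw [hrec]
            exact mul_le_mul_of_nonneg_left hb hpos2.le
          have h3 : (x (k+1)) ^ (-α) * (1 - c * x (k+1) ^ α)
              = (x (k+1)) ^ (-α) - c := by
            have : (x (k+1)) ^ (-α) * (c * x (k+1) ^ α) = c := by
              rw [mul_comm c _, ← mul_assoc, hinv, one_mul]
            ring_nf
            ring_nf at this
            linarith
          linarith
        push_cast; push_cast at ih'; linarith
  -- hence a bound on x n ^ γ
  have hxg : ∀ n : ℕ, 1 ≤ n → (x n) ^ γ ≤ (c * n) ^ (-(γ/α)) := by
    intro n hn
    have hp := hxpos n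
    have hcn : (0:ℝ) < c * n := by
      have : (0:ℝ) < (n:ℝ) := by exact_mod_cast hn
      positivity
    have h1 : x n ^ α ≤ (c * n)⁻¹ := by
      have h2 : c * n ≤ (x n ^ α)⁻¹ := by
        rw [← Real.rpow_neg hp.le]; exact key n hn
      calc x n ^ α = ((x n ^ α)⁻¹)⁻¹ := (inv_inv _).symm
        _ ≤ (c * ↑n)⁻¹ := inv_anti₀ hcn h2
    have h3 : x n ^ γ = (x n ^ α) ^ (γ/α) := by
      rw [← Real.rpow_mul hp.le]; congr 1; field_simp
    have h4 : (x n ^ α) ^ (γ/α) ≤ ((c*↑n)⁻¹) ^ (γ/α) :=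
      Real.rpow_le_rpow (Real.rpow_pos_of_pos hp α).le h1 (by positivity)
    have h5 : ((c*↑n)⁻¹) ^ (γ/α) = (c*↑n) ^ (-(γ/α)) := by
      rw [Real.inv_rpow hcn.le, ← Real.rpow_neg hcn.le]
    rw [h3]; rw [h5] at h4; exact h4
  -- summability of the majorant
  have hsum : Summable (fun k : ℕ => (c * (k:ℝ)) ^ (-(γ/α))) := by
    have h1 : Summable (fun k : ℕ => c ^ (-(γ/α)) * ((k:ℝ)) ^ (-(γ/α))) := by
      apply Summable.mul_left
      rw [Real.summable_nat_rpow]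
      have : 1 < γ / α := (one_lt_div hα).2 hγ
      linarith
    apply h1.congr
    intro k
    rw [← Real.mul_rpow hc0.le (Nat.cast_nonneg k)]
  set C : ℝ := ∑' k : ℕ, (c * (k:ℝ)) ^ (-(γ/α)) with hC_def
  have hC0 : 0 ≤ C := tsum_nonneg (fun k => Real.rpow_nonneg (by positivity) _)
  -- iterate identity
  have hiter : ∀ n j : ℕ, 1 ≤ j → j ≤ n → (MP α)^[j] (y n) = x (n - j) := by
    intro n j hj hjn
    induction j with
    | zero => omega
    | succ k ih =>
      rcases Nat.eq_or_lt_of_le hj with h1 | h1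
      · simp only [← h1, Function.iterate_one]
        exact (hy n (by omega)).2
      · have hk1 : 1 ≤ k := by omega
        have := ih hk1 (by omega)
        rw [Function.iterate_succ_apply', this]
        have hnk : n - k = (n - (k+1)) + 1 := by omega
        rw [hnk]
        exact (hx (n - (k+1))).2
  -- lower bound on Birkhoff sums
  have hS : ∀ n : ℕ, 1 ≤ n →
      -(1 + C) ≤ ∑ j ∈ Finset.range n, (-(((MP α)^[j] (y n)) ^ γ)) := by
    intro n hn
    have hyn := (hy n hn).1
    have hy0 : 0 < y n := (hx₁.1.trans hyn.1)
    have hy1 : y n ≤ 1 := hyn.2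
    have h0 : -(1:ℝ) ≤ -((y n) ^ γ) := by
      have : (y n) ^ γ ≤ 1 := Real.rpow_le_one hy0.le hy1 hγ0.le
      linarith
    have hsplit : ∑ j ∈ Finset.range n, (-(((MP α)^[j] (y n)) ^ γ))
        = -((y n) ^ γ) + ∑ j ∈ Finset.Ico 1 n, (-(((MP α)^[j] (y n)) ^ γ)) := by
      rw [Finset.range_eq_Ico, Finset.sum_eq_sum_Ico_succ_bot hn]
      simp
    have htail : ∑ j ∈ Finset.Ico 1 n, (((MP α)^[j] (y n)) ^ γ) ≤ C := by
      have heq : ∀ j ∈ Finset.Ico 1 n, ((MP α)^[j] (y n)) ^ γ = (x (n - j)) ^ γ := by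
        intro j hj
        rw [Finset.mem_Ico] at hj
        rw [hiter n j hj.1 (by omega)]
      rw [Finset.sum_congr rfl heq]
      have hre : ∑ j ∈ Finset.Ico 1 n, (x (n - j)) ^ γ
          = ∑ k ∈ Finset.Ico 1 n, (x k) ^ γ := by
        apply Finset.sum_nbij' (fun j => n - j) (fun k => n - k)
        all_goals intro a ha
        all_goals simp only [Finset.mem_Ico] at *
        all_goals first | rfl | omega
      rw [hre]
      calc ∑ k ∈ Finset.Ico 1 n, (x k) ^ γ
          ≤ ∑ k ∈ Finset.Ico 1 n, (c * (k:ℝ)) ^ (-(γ/α)) := by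
            apply Finset.sum_le_sum
            intro k hk
            exact hxg k (Finset.mem_Ico.1 hk).1
        _ ≤ C := Summable.sum_le_tsum _ (fun k _ => Real.rpow_nonneg (by positivity) _) hsum
    rw [hsplit]
    have : -C ≤ ∑ j ∈ Finset.Ico 1 n, (-(((MP α)^[j] (y n)) ^ γ)) := by
      have h := neg_le_neg htail
      calc -C ≤ -∑ j ∈ Finset.Ico 1 n, (((MP α)^[j] (y n)) ^ γ) := h
        _ = ∑ j ∈ Finset.Ico 1 n, (-(((MP α)^[j] (y n)) ^ γ)) := by
            rw [Finset.sum_neg_distrib]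
    linarith
  -- conclude
  set ε : ℝ := Real.exp (β * (-(1 + C))) with hε_def
  have hε0 : 0 < ε := Real.exp_pos _
  have hlow : ∀ N : ℕ, (N:ℝ) * ε ≤ ∑ n ∈ Finset.Icc 1 N,
      Real.exp (β * ∑ j ∈ Finset.range n, (-(((MP α)^[j] (y n)) ^ γ))) := by
    intro N
    have hcard : (Finset.Icc 1 N).card = N := by simp
    have := Finset.card_nsmul_le_sum (Finset.Icc 1 N)
      (fun n => Real.exp (β * ∑ j ∈ Finset.range n, (-(((MP α)^[j] (y n)) ^ γ)))) ε
      (fun n hn => by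
        have hn1 : 1 ≤ n := (Finset.mem_Icc.1 hn).1
        apply Real.exp_le_exp.2
        exact mul_le_mul_of_nonneg_left (hS n hn1) hβ.le)
    rw [hcard, nsmul_eq_mul] at this
    exact this
  have hmul : Filter.Tendsto (fun N : ℕ => (N:ℝ) * ε) Filter.atTop Filter.atTop :=
    Filter.Tendsto.atTop_mul_const hε0 tendsto_natCast_atTop_atTop
  exact Filter.tendsto_atTop_mono hlow hmul
end

section
/- Let α > 0 and γ ∈ (0, α], and let f be the Manneville–Pomeau map of parameter α with backward orbit (x_n) of 1. Let φ be continuous on [0,1], and suppose there are c < 0 and n₀ ∈ ℕ such that φ(x) − φ(0) < c x^γ for all x ∈ (0, x_{n₀}], and (1/(2α^{γ/α})) n^{−γ/α} < x_n^γ for all n ≥ n₀. Then for θ = 1 − γ/α and every y ∈ J₀ with return time m(y) ≥ n₀ one has, with ‖φ‖ the sup norm: S_{m(y)} φ(y) − m(y)φ(0) ≤ 2n₀‖φ‖ + c Σ_{j=n₀+1}^{m(y)} x_j^γ ≤ 2n₀‖φ‖ − (c/(2α^{γ/α}θ))(n₀+1)^θ + (c/(2α^{γ/α}θ))(m(y)+1)^θ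 when γ < α. -/
open Real Set Filter Topology

private lemma key_ineq {θ : ℝ} (hθ0 : 0 < θ) (hθ1 : θ ≤ 1) {t : ℝ} (ht : 1 ≤ t) :
    (t + 1) ^ θ - t ^ θ ≤ θ * t ^ (θ - 1) := by
  have ht0 : (0:ℝ) < t := lt_of_lt_of_le one_pos ht
  have h1 : (t + 1) ^ θ = t ^ θ * (1 + 1/t) ^ θ := by
    rw [← Real.mul_rpow ht0.le (by positivity)]
    congr 1
    field_simp
  have h2 : (1 + 1/t) ^ θ ≤ 1 + θ * (1/t) :=
    rpow_one_add_le_one_add_mul_self (le_trans (by norm_num) (by positivity : (0:ℝ) ≤ 1/t)) hθ0.le hθ1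
  have h3 : t ^ θ * (1 + 1/t) ^ θ ≤ t ^ θ * (1 + θ * (1/t)) :=
    mul_le_mul_of_nonneg_left h2 (Real.rpow_nonneg ht0.le θ)
  have h4 : t ^ θ * (1 + θ * (1/t)) = t ^ θ + θ * (t ^ θ / t) := by ring
  have h5 : t ^ θ / t = t ^ (θ - 1) := by
    rw [Real.rpow_sub ht0, Real.rpow_one]
  rw [h1]
  rw [h5] at h4
  linarith

private lemma sum_ineq {θ : ℝ} (hθ0 : 0 < θ) (hθ1 : θ ≤ 1) (n₀ : ℕ) :
    ∀ M, n₀ ≤ M →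
      (((M:ℝ) + 1) ^ θ - ((n₀:ℝ) + 1) ^ θ) / θ ≤
        ∑ j ∈ Finset.Icc (n₀ + 1) M, (j:ℝ) ^ (θ - 1) := by
  intro M hM
  induction M, hM using Nat.le_induction with
  | base =>
    rw [Finset.Icc_eq_empty (by omega), Finset.sum_empty, sub_self, zero_div]
  | succ M hM ih =>
    rw [Finset.sum_Icc_succ_top (by omega : n₀ + 1 ≤ M + 1)]
    have hk : (((M:ℝ) + 1) + 1) ^ θ - ((M:ℝ) + 1) ^ θ ≤ θ * ((M:ℝ) + 1) ^ (θ - 1) :=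
      key_ineq hθ0 hθ1 (by have := Nat.cast_nonneg (α := ℝ) M; linarith)
    have hdiv : ((((M:ℝ) + 1) + 1) ^ θ - ((M:ℝ) + 1) ^ θ) / θ ≤ ((M:ℝ) + 1) ^ (θ - 1) := by
      rw [div_le_iff₀ hθ0]; linarith
    push_cast
    have heq : (((M:ℝ) + 1 + 1) ^ θ - ((n₀:ℝ) + 1) ^ θ) / θ =
        (((M:ℝ) + 1) ^ θ - ((n₀:ℝ) + 1) ^ θ) / θ +
          ((((M:ℝ) + 1) + 1) ^ θ - ((M:ℝ) + 1) ^ θ) / θ := by ring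
    rw [heq]
    exact add_le_add ih hdiv

theorem stmt17 (α γ : ℝ) (hα : 0 < α) (hγ : 0 < γ) (hγα : γ < α)
    (x₁ : ℝ) (hx₁ : x₁ ∈ Set.Ioo (0:ℝ) 1) (hfix : x₁ * (1 + x₁ ^ α) = 1)
    (x : ℕ → ℝ) (hx0 : x 0 = 1)
    (hx : ∀ n, x (n+1) ∈ Set.Ioo (0:ℝ) (x n) ∧ MP α (x (n+1)) = x n)
    (φ : ℝ → ℝ) (hφ : ContinuousOn φ (Set.Icc 0 1))
    (K : ℝ) (hK : ∀ t ∈ Set.Icc (0:ℝ) 1, |φ t| ≤ K)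
    (c : ℝ) (hc : c < 0) (n₀ : ℕ) (hn₀ : 1 ≤ n₀)
    (h1 : ∀ t ∈ Set.Ioc (0:ℝ) (x n₀), φ t - φ 0 < c * t ^ γ)
    (h2 : ∀ n : ℕ, n₀ ≤ n → 1 / (2 * α ^ (γ/α)) * (n:ℝ) ^ (-(γ/α)) < (x n) ^ γ)
    (y : ℝ) (M : ℕ) (hM1 : 1 ≤ M) (hMn₀ : n₀ ≤ M)
    (hy : y ∈ Set.Ioc x₁ 1)
    (hret : (MP α)^[M] y ∈ Set.Ioc x₁ 1)
    (hmin : ∀ j, 1 ≤ j → j < M → (MP α)^[j] y ∉ Set.Ioc x₁ 1)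
    (horb : ∀ j, 1 ≤ j → j < M → (MP α)^[j] y ∈ Set.Ioc (x (M - j + 1)) (x (M - j))) :
    (∑ j ∈ Finset.range M, φ ((MP α)^[j] y)) - M * φ 0 ≤
        2 * n₀ * K + c * ∑ j ∈ Finset.Icc (n₀+1) M, (x j) ^ γ ∧
    2 * n₀ * K + c * ∑ j ∈ Finset.Icc (n₀+1) M, (x j) ^ γ ≤
        2 * n₀ * K - c / (2 * α ^ (γ/α) * (1 - γ/α)) * ((n₀:ℝ) + 1) ^ (1 - γ/α)
          + c / (2 * α ^ (γ/α) * (1 - γ/α)) * ((M:ℝ) + 1) ^ (1 - γ/α) := by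
  -- positivity / monotonicity facts about x
  have hxpos : ∀ n, 0 < x n := by
    intro n
    cases n with
    | zero => rw [hx0]; exact one_pos
    | succ n => exact (hx n).1.1
  have hantix : Antitone x := antitone_nat_of_succ_le fun n => (hx n).1.2.le
  have hxle1 : ∀ n, x n ≤ 1 := fun n => hx0 ▸ hantix (Nat.zero_le n)
  have hK0 : 0 ≤ K := le_trans (abs_nonneg _) (hK 0 (by norm_num))
  -- orbit stays in [0,1]
  have horb' : ∀ j, j < M → (MP α)^[j] y ∈ Set.Icc (0:ℝ) 1 := by
    intro j hj
    rcases Nat.eq_zero_or_pos j with rfl | hj1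
    · simp only [Function.iterate_zero_apply]
      exact ⟨(hx₁.1.trans hy.1).le, hy.2⟩
    · have h := horb j hj1 hj
      exact ⟨(lt_trans (hxpos _) h.1).le, le_trans h.2 (hxle1 _)⟩
  -- term-wise bound
  have hterm : ∀ j ∈ Finset.range M,
      φ ((MP α)^[j] y) - φ 0 ≤
        (if 1 ≤ j ∧ j ≤ M - n₀ then c * x (M - j + 1) ^ γ else 2 * K) := by
    intro j hj
    rw [Finset.mem_range] at hj
    split_ifs with h
    · obtain ⟨hj1, hj2⟩ := h
      have hjM : j < M := by omega
      have ho := horb j hj1 hjM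
      have hlt : x (M - j + 1) < (MP α)^[j] y := ho.1
      have hle : (MP α)^[j] y ≤ x n₀ := le_trans ho.2 (hantix (by omega))
      have h1' := h1 _ ⟨lt_trans (hxpos _) hlt, hle⟩
      have hr : x (M - j + 1) ^ γ ≤ ((MP α)^[j] y) ^ γ :=
        Real.rpow_le_rpow (hxpos _).le hlt.le hγ.le
      have := mul_le_mul_of_nonpos_left hr hc.le
      linarith
    · have hmem := horb' j hj
      have ha := abs_le.mp (hK _ hmem)
      have hb := abs_le.mp (hK 0 (by norm_num))
      linarith [ha.1, ha.2, hb.1, hb.2]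
  -- the filter set
  have hfil : Finset.filter (fun j => 1 ≤ j ∧ j ≤ M - n₀) (Finset.range M) =
      Finset.Icc 1 (M - n₀) := by
    ext a
    simp only [Finset.mem_filter, Finset.mem_range, Finset.mem_Icc]
    omega
  have hcard : (Finset.filter (fun j => ¬(1 ≤ j ∧ j ≤ M - n₀)) (Finset.range M)).card = n₀ := by
    have h := Finset.card_filter_add_card_filter_not
      (s := Finset.range M) (p := fun j => 1 ≤ j ∧ j ≤ M - n₀)
    rw [hfil, Finset.card_range, Nat.card_Icc] at h
    omega
  -- reindexing
  have hre : ∑ j ∈ Finset.Icc 1 (M - n₀), x (M - j + 1) ^ γ =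
      ∑ k ∈ Finset.Icc (n₀ + 1) M, x k ^ γ := by
    refine Finset.sum_nbij' (i := fun j => M + 1 - j) (j := fun k => M + 1 - k) ?_ ?_ ?_ ?_ ?_
    · intro a ha; rw [Finset.mem_Icc] at ha ⊢; omega
    · intro a ha; rw [Finset.mem_Icc] at ha ⊢; omega
    · intro a ha; rw [Finset.mem_Icc] at ha; omega
    · intro a ha; rw [Finset.mem_Icc] at ha; omega
    · intro a ha
      rw [Finset.mem_Icc] at ha
      congr 2
      omega
  have part1 : (∑ j ∈ Finset.range M, φ ((MP α)^[j] y)) - M * φ 0 ≤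
      2 * n₀ * K + c * ∑ j ∈ Finset.Icc (n₀+1) M, (x j) ^ γ := by
    have step1 : (∑ j ∈ Finset.range M, φ ((MP α)^[j] y)) - M * φ 0
        = ∑ j ∈ Finset.range M, (φ ((MP α)^[j] y) - φ 0) := by
      rw [Finset.sum_sub_distrib, Finset.sum_const, Finset.card_range, nsmul_eq_mul]
    rw [step1]
    calc ∑ j ∈ Finset.range M, (φ ((MP α)^[j] y) - φ 0)
        ≤ ∑ j ∈ Finset.range M,
            (if 1 ≤ j ∧ j ≤ M - n₀ then c * x (M - j + 1) ^ γ else 2 * K) :=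
          Finset.sum_le_sum hterm
      _ = (∑ j ∈ Finset.filter (fun j => 1 ≤ j ∧ j ≤ M - n₀) (Finset.range M),
            c * x (M - j + 1) ^ γ)
          + ∑ j ∈ Finset.filter (fun j => ¬(1 ≤ j ∧ j ≤ M - n₀)) (Finset.range M), 2 * K :=
          Finset.sum_ite _ _
      _ = 2 * n₀ * K + c * ∑ j ∈ Finset.Icc (n₀+1) M, (x j) ^ γ := by
          rw [hfil, Finset.sum_const, hcard, ← Finset.mul_sum, hre, nsmul_eq_mul]
          ring
  refine ⟨part1, ?_⟩
  -- Part 2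
  have hs0 : 0 < γ / α := div_pos hγ hα
  have hs1 : γ / α < 1 := (div_lt_one hα).2 hγα
  have hθ0 : 0 < 1 - γ / α := by linarith
  have hA : 0 < α ^ (γ / α) := Real.rpow_pos_of_pos hα _
  have hexp : (1 - γ / α) - 1 = -(γ / α) := by ring
  have hsum2 : (((M:ℝ) + 1) ^ (1 - γ/α) - ((n₀:ℝ) + 1) ^ (1 - γ/α)) / (1 - γ/α)
      ≤ ∑ j ∈ Finset.Icc (n₀ + 1) M, (j:ℝ) ^ (-(γ/α)) := by
    have h := sum_ineq hθ0 (by linarith) n₀ M hMn₀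
    rw [hexp] at h
    exact h
  have hlower : ∑ j ∈ Finset.Icc (n₀ + 1) M, 1 / (2 * α ^ (γ/α)) * (j:ℝ) ^ (-(γ/α))
      ≤ ∑ j ∈ Finset.Icc (n₀ + 1) M, x j ^ γ := by
    refine Finset.sum_le_sum fun j hj => ?_
    rw [Finset.mem_Icc] at hj
    exact (h2 j (by omega)).le
  have h3 : c * ∑ j ∈ Finset.Icc (n₀ + 1) M, x j ^ γ
      ≤ c * ∑ j ∈ Finset.Icc (n₀ + 1) M, 1 / (2 * α ^ (γ/α)) * (j:ℝ) ^ (-(γ/α)) :=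
    mul_le_mul_of_nonpos_left hlower hc.le
  rw [← Finset.mul_sum] at h3
  set S := ∑ j ∈ Finset.Icc (n₀ + 1) M, (j:ℝ) ^ (-(γ/α)) with hS
  have hB : c * (1 / (2 * α ^ (γ/α))) ≤ 0 := by
    apply mul_nonpos_of_nonpos_of_nonneg hc.le
    positivity
  have h4 : c * (1 / (2 * α ^ (γ/α)) * S)
      ≤ c * (1 / (2 * α ^ (γ/α)))
          * ((((M:ℝ) + 1) ^ (1 - γ/α) - ((n₀:ℝ) + 1) ^ (1 - γ/α)) / (1 - γ/α)) := by
    rw [← mul_assoc]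
    exact mul_le_mul_of_nonpos_left hsum2 hB
  have heq : c * (1 / (2 * α ^ (γ/α)))
        * ((((M:ℝ) + 1) ^ (1 - γ/α) - ((n₀:ℝ) + 1) ^ (1 - γ/α)) / (1 - γ/α))
      = - (c / (2 * α ^ (γ/α) * (1 - γ/α)) * ((n₀:ℝ) + 1) ^ (1 - γ/α))
        + c / (2 * α ^ (γ/α) * (1 - γ/α)) * ((M:ℝ) + 1) ^ (1 - γ/α) := by
    field_simp
    ring
  rw [heq] at h4
  linarith
end
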